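/- arXiv:1801.03367 — 5 statements merged into one kernel-verified Lean document; each statement's English description precedes it below -/
import Mathlib

section
/- In a finite two-player zero-sum stateless (matrix) game with action sets A1, A2 and utility function v : A1 × A2 → ℝ, the maximin value over mixed strategies equals the minimax value: sup over distributions ς1 on A1 of inf over distributions ς2 on A2 of the expected utility equals inf over ς2 of sup over ς1 of the expected utility. -/
open Set


open scoped BigOperators

/-- Mixed strategies: probability distributions on a finite action set. -/
def MixedStrat (α : Type) [Fintype α] : Set (α → ℝ) :=
  {p | (∀ a, 0 ≤ p a) ∧ ∑ a, p a = 1}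

/-- Expected utility of a mixed strategy pair in a matrix game. -/
noncomputable def expPay {α β : Type} [Fintype α] [Fintype β]
    (v : α → β → ℝ) (p : α → ℝ) (q : β → ℝ) : ℝ :=
  ∑ a, ∑ b, p a * q b * v a b


section aux
variable {α β : Type} [Fintype α] [Fintype β]

lemma mixed_eq_std : MixedStrat α = stdSimplex ℝ α := rfl

lemma unif_mem [Nonempty α] : (fun _ => (Fintype.card α : ℝ)⁻¹) ∈ MixedStrat α := by
  constructor
  · intro a; positivity
  · have h : (Fintype.card α : ℝ) ≠ 0 := by
      exact_mod_cast Fintype.card_ne_zero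
    simp only [Finset.sum_const, Finset.card_univ, nsmul_eq_mul]
    field_simp

instance instNonemptyMixed [Nonempty α] : Nonempty (MixedStrat α) :=
  ⟨⟨_, unif_mem⟩⟩

lemma expPay_eq (v : α → β → ℝ) (p : α → ℝ) (q : β → ℝ) :
    expPay v p q = ∑ a, p a * ∑ b, q b * v a b := by
  unfold expPay
  refine Finset.sum_congr rfl fun a _ => ?_
  rw [Finset.mul_sum]
  refine Finset.sum_congr rfl fun b _ => by ring

lemma mem_le_one {p : α → ℝ} (hp : p ∈ MixedStrat α) (a : α) : p a ≤ 1 := by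
  rw [← hp.2]
  exact Finset.single_le_sum (fun i _ => hp.1 i) (Finset.mem_univ a)

lemma expPay_abs_le (v : α → β → ℝ) {p : α → ℝ} {q : β → ℝ}
    (hp : p ∈ MixedStrat α) (hq : q ∈ MixedStrat β) :
    |expPay v p q| ≤ ∑ a, ∑ b, |v a b| := by
  refine (Finset.abs_sum_le_sum_abs _ _).trans (Finset.sum_le_sum fun a _ => ?_)
  refine (Finset.abs_sum_le_sum_abs _ _).trans (Finset.sum_le_sum fun b _ => ?_)
  calc |p a * q b * v a b| = (p a * q b) * |v a b| := by
        rw [abs_mul, abs_of_nonneg (mul_nonneg (hp.1 a) (hq.1 b))]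
    _ ≤ 1 * |v a b| := by
        have : p a * q b ≤ 1 * 1 := by
          gcongr
          exacts [hq.1 b, mem_le_one hp a, mem_le_one hq b]
        nlinarith [abs_nonneg (v a b)]
    _ = |v a b| := one_mul _
end aux

section alt
variable {α β : Type} [Fintype α] [Fintype β]

lemma alternative [Nonempty α] [Nonempty β] (v : α → β → ℝ) :
    (∃ p ∈ MixedStrat α, ∀ q ∈ MixedStrat β, 0 ≤ expPay v p q) ∨
    (∃ q ∈ MixedStrat β, ∀ p ∈ MixedStrat α, expPay v p q ≤ 0) := by
  classical
  set T : (β → ℝ) →ₗ[ℝ] (α → ℝ) :=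
    { toFun := fun q => fun a => ∑ b, q b * v a b
      map_add' := by
        intro x y; funext a
        simp [add_mul, Finset.sum_add_distrib]
      map_smul' := by
        intro c x; funext a
        simp [Finset.mul_sum, mul_assoc] } with hT
  set C : Set (α → ℝ) := T '' stdSimplex ℝ β with hC
  set K : Set (α → ℝ) := Set.pi Set.univ (fun _ : α => Iic (0:ℝ)) with hK
  by_cases hCK : (C ∩ K).Nonempty
  · obtain ⟨x, ⟨q, hq, rfl⟩, hxK⟩ := hCK
    right
    refine ⟨q, hq, fun p hp => ?_⟩
    rw [expPay_eq]
    refine Finset.sum_nonpos fun a _ => ?_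
    exact mul_nonpos_of_nonneg_of_nonpos (hp.1 a) (hxK a (Set.mem_univ a))
  · have hdisj : Disjoint C K :=
      Set.disjoint_iff_inter_eq_empty.mpr (Set.not_nonempty_iff_eq_empty.mp hCK)
    have hTcont : Continuous T := T.continuous_of_finiteDimensional
    have hCc : IsCompact C := (isCompact_stdSimplex ℝ β).image hTcont
    have hCconv : Convex ℝ C := (convex_stdSimplex ℝ β).linear_image T
    have hKconv : Convex ℝ K := convex_pi (fun a _ => convex_Iic 0)
    have hKcl : IsClosed K := isClosed_set_pi (fun a _ => isClosed_Iic)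
    obtain ⟨f, u, w, hfC, huw, hfK⟩ :=
      geometric_hahn_banach_compact_closed hCconv hCc hKconv hKcl hdisj
    have h0K : (0 : α → ℝ) ∈ K := fun a _ => Set.mem_Iic.mpr (le_refl 0)
    have hw0 : w < 0 := by simpa using hfK 0 h0K
    have hrep : ∀ x : α → ℝ, f x = ∑ a, x a * f (fun j => if a = j then 1 else 0) := by
      intro x
      conv_lhs => rw [pi_eq_sum_univ x]
      rw [map_sum]
      refine Finset.sum_congr rfl fun a _ => ?_
      rw [map_smul, smul_eq_mul]
    set y : α → ℝ := fun a => -f (fun j => if a = j then 1 else 0) with hy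
    have hy0 : ∀ a, 0 ≤ y a := by
      intro a
      by_contra h
      push_neg at h
      set e : α → ℝ := fun j => if a = j then 1 else 0 with he
      have hfe : 0 < f e := by
        have : -f e < 0 := h
        linarith
      set t : ℝ := (w - 1) / f e with ht
      have htneg : t ≤ 0 := div_nonpos_of_nonpos_of_nonneg (by linarith) hfe.le
      have hmem : (t • e) ∈ K := by
        intro j _
        simp only [Pi.smul_apply, smul_eq_mul, he, Set.mem_Iic]
        split
        · simpa using htneg
        · simp
      have hlt := hfK _ hmem
      rw [map_smul, smul_eq_mul, ht, div_mul_cancel₀ _ hfe.ne'] at hlt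
      linarith
    have hne : C.Nonempty := ⟨T (fun _ => (Fintype.card β : ℝ)⁻¹), ⟨_, unif_mem, rfl⟩⟩
    have hfCneg : ∀ x ∈ C, f x < 0 := fun x hx => lt_trans (hfC x hx) (lt_trans huw hw0)
    set S : ℝ := ∑ a, y a with hS
    have hSpos : 0 < S := by
      rcases hne with ⟨x0, hx0⟩
      have hfx0 : f x0 < 0 := hfCneg x0 hx0
      rcases lt_or_eq_of_le (Finset.sum_nonneg fun a _ => hy0 a : (0:ℝ) ≤ S) with h | h
      · exact h
      · exfalso
        have hall : ∀ a ∈ Finset.univ, y a = 0 :=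
          (Finset.sum_eq_zero_iff_of_nonneg fun a _ => hy0 a).mp h.symm
        have : f x0 = 0 := by
          rw [hrep x0]
          refine Finset.sum_eq_zero fun a _ => ?_
          have := hall a (Finset.mem_univ a)
          have hz : f (fun j => if a = j then 1 else 0) = 0 := by
            have : -f (fun j => if a = j then 1 else 0) = 0 := this
            linarith
          rw [hz, mul_zero]
        linarith
    left
    refine ⟨fun a => y a / S, ⟨fun a => div_nonneg (hy0 a) hSpos.le, ?_⟩, ?_⟩
    · rw [← Finset.sum_div, ← hS, div_self hSpos.ne']
    · intro q hq
      have hTqC : T q ∈ C := ⟨q, hq, rfl⟩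
      have hfTq : f (T q) < 0 := hfCneg _ hTqC
      have hkey : ∑ a, y a * (T q) a = -f (T q) := by
        rw [hrep (T q), ← Finset.sum_neg_distrib]
        refine Finset.sum_congr rfl fun a _ => by rw [hy]; ring
      rw [expPay_eq]
      have : ∑ a, (y a / S) * ∑ b, q b * v a b = (∑ a, y a * (T q) a) / S := by
        rw [Finset.sum_div]
        refine Finset.sum_congr rfl fun a _ => ?_
        rw [show T q a = ∑ b, q b * v a b from rfl]
        ring
      rw [this, hkey]
      have : 0 < -f (T q) := by linarith
      positivity
end alt

lemma expPay_sub_const {α β : Type} [Fintype α] [Fintype β] (v : α → β → ℝ) (c : ℝ)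
    {p : α → ℝ} {q : β → ℝ} (hp : p ∈ MixedStrat α) (hq : q ∈ MixedStrat β) :
    expPay (fun a b => v a b - c) p q = expPay v p q - c := by
  unfold expPay
  have key : ∀ a, ∑ b, p a * q b * c = p a * c := by
    intro a
    calc ∑ b, p a * q b * c = ∑ b, q b * (p a * c) :=
          Finset.sum_congr rfl fun b _ => by ring
      _ = (∑ b, q b) * (p a * c) := (Finset.sum_mul _ _ _).symm
      _ = p a * c := by rw [hq.2, one_mul]
  calc ∑ a, ∑ b, p a * q b * (v a b - c)
      = ∑ a, ((∑ b, p a * q b * v a b) - ∑ b, p a * q b * c) := by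
        refine Finset.sum_congr rfl fun a _ => ?_
        rw [← Finset.sum_sub_distrib]
        exact Finset.sum_congr rfl fun b _ => by ring
    _ = (∑ a, ∑ b, p a * q b * v a b) - ∑ a, ∑ b, p a * q b * c :=
        Finset.sum_sub_distrib _ _
    _ = (∑ a, ∑ b, p a * q b * v a b) - c := by
        rw [Finset.sum_congr rfl fun a _ => key a, ← Finset.sum_mul, hp.2, one_mul]

/-- Maximin value of a finite zero-sum matrix game over mixed strategies. -/
noncomputable def matVal (α β : Type) [Fintype α] [Fintype β]
    (v : α → β → ℝ) : ℝ :=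
  ⨆ p : MixedStrat α, ⨅ q : MixedStrat β, expPay v p.1 q.1

/-- Von Neumann minimax theorem for finite matrix games:
the maximin value over mixed strategies equals the minimax value. -/
theorem minimax_theorem (α β : Type) [Fintype α] [Fintype β]
    [Nonempty α] [Nonempty β] (v : α → β → ℝ) :
    matVal α β v = ⨅ q : MixedStrat β, ⨆ p : MixedStrat α, expPay v p.1 q.1 := by
  classical
  set B : ℝ := ∑ a, ∑ b, |v a b| with hBdef
  have hbd : ∀ (p : MixedStrat α) (q : MixedStrat β),
      -B ≤ expPay v p.1 q.1 ∧ expPay v p.1 q.1 ≤ B :=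
    fun p q => abs_le.mp (expPay_abs_le v p.2 q.2)
  have hbb : ∀ p : MixedStrat α,
      BddBelow (Set.range fun q : MixedStrat β => expPay v p.1 q.1) := by
    intro p; refine ⟨-B, ?_⟩; rintro x ⟨q, rfl⟩; exact (hbd p q).1
  have hba : ∀ q : MixedStrat β,
      BddAbove (Set.range fun p : MixedStrat α => expPay v p.1 q.1) := by
    intro q; refine ⟨B, ?_⟩; rintro x ⟨p, rfl⟩; exact (hbd p q).2
  have hOuterA : BddAbove (Set.range fun p : MixedStrat α =>
      ⨅ q : MixedStrat β, expPay v p.1 q.1) := by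
    refine ⟨B, ?_⟩; rintro x ⟨p, rfl⟩
    exact ciInf_le_of_le (hbb p) (Classical.arbitrary _) (hbd p _).2
  have hOuterB : BddBelow (Set.range fun q : MixedStrat β =>
      ⨆ p : MixedStrat α, expPay v p.1 q.1) := by
    refine ⟨-B, ?_⟩; rintro x ⟨q, rfl⟩
    exact le_ciSup_of_le (hba q) (Classical.arbitrary _) (hbd _ q).1
  have le1 : matVal α β v ≤ ⨅ q : MixedStrat β, ⨆ p : MixedStrat α, expPay v p.1 q.1 := by
    rw [matVal]
    refine ciSup_le fun p => le_ciInf fun q => ?_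
    exact (ciInf_le (hbb p) q).trans (le_ciSup (hba q) p)
  refine le_antisymm le1 ?_
  by_contra h
  push_neg at h
  obtain ⟨c, hc1, hc2⟩ := exists_between h
  rcases alternative (fun a b => v a b - c) with ⟨p, hp, hgood⟩ | ⟨q, hq, hgood⟩
  · have h1 : c ≤ ⨅ q : MixedStrat β, expPay v p q.1 := by
      refine le_ciInf fun q => ?_
      have h0 := hgood q.1 q.2
      rw [expPay_sub_const v c hp q.2] at h0
      linarith
    have h2 : (⨅ q : MixedStrat β, expPay v p q.1) ≤ matVal α β v := by
      rw [matVal]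
      exact le_ciSup hOuterA ⟨p, hp⟩
    linarith
  · have h1 : (⨆ p : MixedStrat α, expPay v p.1 q) ≤ c := by
      refine ciSup_le fun p => ?_
      have h0 := hgood p.1 p.2
      rw [expPay_sub_const v c p.2 hq] at h0
      linarith
    have h2 : (⨅ q' : MixedStrat β, ⨆ p : MixedStrat α, expPay v p.1 q'.1)
        ≤ ⨆ p : MixedStrat α, expPay v p.1 q := ciInf_le hOuterB ⟨q, hq⟩
    linarith
end

section
/- Soundness of lower/upper game abstraction: Let (G, u) be a finite concurrent two-player zero-sum game and Π a partition of its state space such that any two states in the same partition set have identical available-action sets for both players. Let (G↓, u↓) and (G↑, u↑) be the lower and upper abstractions of (G, u) with respect to Π. Then for every L ∈ ℕ: υ_{2L}(G↓, u↓) ≤ υ_L(G, u) ≤ υ_{2L}(G↑, u↑). -/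
open scoped BigOperators

/-- A finite concurrent two-player game structure `(S, s0, A, Γ1, Γ2, δ)`. -/
structure ConcGame where
  S : Type
  A : Type
  [fS : Fintype S]
  [dS : DecidableEq S]
  [fA : Fintype A]
  [dA : DecidableEq A]
  s0 : S
  act1 : S → Finset A
  act2 : S → Finset A
  h1 : ∀ s, (act1 s).Nonempty
  h2 : ∀ s, (act2 s).Nonempty
  tr : S → A → A → S

attribute [instance] ConcGame.fS ConcGame.dS ConcGame.fA ConcGame.dA

/-- A history: a finite sequence of (state, action pair) tuples. -/
abbrev Hist (G : ConcGame) := List (G.S × G.A × G.A)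

/-- Mixed (history-dependent) strategies for available-action map `act`:
after every history and at every state, a probability distribution
supported on the available actions. -/
def Strat (G : ConcGame) (act : G.S → Finset G.A) : Set (Hist G → G.S → G.A → ℝ) :=
  {σ | ∀ h s, (∀ a, 0 ≤ σ h s a) ∧ (∑ a ∈ act s, σ h s a = 1) ∧
        ∀ a ∉ act s, σ h s a = 0}

/-- Expected cumulative `L`-step utility of the mixed strategy profile `(σ1, σ2)`
starting at state `s` with current history `h`. -/
noncomputable def expVal (G : ConcGame) (u : G.S → ℝ)
    (σ1 σ2 : Hist G → G.S → G.A → ℝ) : ℕ → G.S → Hist G → ℝ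
  | 0, _, _ => 0
  | (L + 1), s, h =>
      u s + ∑ a1 ∈ G.act1 s, ∑ a2 ∈ G.act2 s,
        σ1 h s a1 * σ2 h s a2 *
          expVal G u σ1 σ2 L (G.tr s a1 a2) (h ++ [(s, a1, a2)])

/-- The `L`-step finite-horizon value of the game started at state `s`:
`sup` over player-1 mixed strategies of `inf` over player-2 mixed strategies
of the expected cumulative utility. -/
noncomputable def valFrom (G : ConcGame) (u : G.S → ℝ) (L : ℕ) (s : G.S) : ℝ :=
  ⨆ σ1 : Strat G G.act1, ⨅ σ2 : Strat G G.act2, expVal G u σ1.1 σ2.1 L s []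

/-- The `L`-step finite-horizon value `υ_L(G, u)` of the game. -/
noncomputable def gval (G : ConcGame) (u : G.S → ℝ) (L : ℕ) : ℝ :=
  valFrom G u L G.s0

/-- The partition induced by a setoid is compatible with the game's action sets:
equivalent states have identical available-action sets for both players. -/
def Compatible (G : ConcGame) (r : Setoid G.S) : Prop :=
  ∀ s s', r.r s s' → G.act1 s = G.act1 s' ∧ G.act2 s = G.act2 s'

section Abstraction

open Classical

variable (G : ConcGame) (r : Setoid G.S)

/-- The partition class (as a set of original states) of an abstract state `q`. -/
def classOf (q : Quotient r) : Set G.S := {s | Quotient.mk r s = q}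

/-- State space of the abstracted games: partition classes plus dummy states
`(class, action, action)`. -/
abbrev AbsS := Quotient r ⊕ (Quotient r × G.A × G.A)

/-- Action space of the abstracted games: original actions, plus choices of a
successor class at dummy states. -/
abbrev AbsA := G.A ⊕ Quotient r

/-- The finset of successor classes reachable from some state of class `π`
under the action pair `(a1, a2)` (the set `X_d` for dummy state `d = (π,a1,a2)`). -/
noncomputable def succClasses (π : Quotient r) (a1 a2 : G.A) : Finset (Quotient r) :=
  letI : DecidableEq (Quotient r) := Classical.decEq _
  letI : Fintype (Quotient r) := Fintype.ofFinite _
  (Finset.univ.filter (fun s => Quotient.mk r s = π)).image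
    (fun s => Quotient.mk r (G.tr s a1 a2))

lemma succClasses_nonempty (π : Quotient r) (a1 a2 : G.A) :
    (succClasses G r π a1 a2).Nonempty := by
  classical
  refine ⟨Quotient.mk r (G.tr (Quotient.out π) a1 a2), ?_⟩
  unfold succClasses
  simp only [Finset.mem_image, Finset.mem_filter, Finset.mem_univ, true_and]
  exact ⟨Quotient.out π, Quotient.out_eq π, rfl⟩

/-- The lower abstraction `G↓` of `G` with respect to the partition induced by `r`:
transitions from a class go to the corresponding dummy state, and at dummy states
player 2 (the minimizer) alone chooses the successor class. -/
noncomputable def lowerAbs : ConcGame :=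
  letI : DecidableEq (Quotient r) := Classical.decEq _
  letI : Fintype (Quotient r) := Fintype.ofFinite _
  { S := AbsS G r
    A := AbsA G r
    s0 := Sum.inl (Quotient.mk r G.s0)
    act1 := fun s => match s with
      | Sum.inl q => (G.act1 (Quotient.out q)).image Sum.inl
      | Sum.inr d => {Sum.inr d.1}
    act2 := fun s => match s with
      | Sum.inl q => (G.act2 (Quotient.out q)).image Sum.inl
      | Sum.inr d => (succClasses G r d.1 d.2.1 d.2.2).image Sum.inr
    h1 := by
      rintro (q | d)
      · exact (G.h1 _).image _
      · exact Finset.singleton_nonempty _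
    h2 := by
      rintro (q | d)
      · exact (G.h2 _).image _
      · exact (succClasses_nonempty G r d.1 d.2.1 d.2.2).image _
    tr := fun s a1 a2 => match s, a1, a2 with
      | Sum.inl q, Sum.inl b1, Sum.inl b2 => Sum.inr (q, b1, b2)
      | Sum.inl q, _, _ => Sum.inl q
      | Sum.inr d, _, Sum.inr π' => Sum.inl π'
      | Sum.inr d, _, _ => Sum.inl d.1 }

/-- The upper abstraction `G↑` of `G` with respect to the partition induced by `r`:
transitions from a class go to the corresponding dummy state, and at dummy states
player 1 (the maximizer) alone chooses the successor class. -/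
noncomputable def upperAbs : ConcGame :=
  letI : DecidableEq (Quotient r) := Classical.decEq _
  letI : Fintype (Quotient r) := Fintype.ofFinite _
  { S := AbsS G r
    A := AbsA G r
    s0 := Sum.inl (Quotient.mk r G.s0)
    act1 := fun s => match s with
      | Sum.inl q => (G.act1 (Quotient.out q)).image Sum.inl
      | Sum.inr d => (succClasses G r d.1 d.2.1 d.2.2).image Sum.inr
    act2 := fun s => match s with
      | Sum.inl q => (G.act2 (Quotient.out q)).image Sum.inl
      | Sum.inr d => {Sum.inr d.1}
    h1 := by
      rintro (q | d)
      · exact (G.h1 _).image _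
      · exact (succClasses_nonempty G r d.1 d.2.1 d.2.2).image _
    h2 := by
      rintro (q | d)
      · exact (G.h2 _).image _
      · exact Finset.singleton_nonempty _
    tr := fun s a1 a2 => match s, a1, a2 with
      | Sum.inl q, Sum.inl b1, Sum.inl b2 => Sum.inr (q, b1, b2)
      | Sum.inl q, _, _ => Sum.inl q
      | Sum.inr d, Sum.inr π', _ => Sum.inl π'
      | Sum.inr d, _, _ => Sum.inl d.1 }

/-- Lower abstract utility: minimum of `u` over the class, `0` at dummy states. -/
noncomputable def lowerU (u : G.S → ℝ) : AbsS G r → ℝ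
  | Sum.inl q => sInf (u '' classOf G r q)
  | Sum.inr _ => 0

/-- Upper abstract utility: maximum of `u` over the class, `0` at dummy states. -/
noncomputable def upperU (u : G.S → ℝ) : AbsS G r → ℝ
  | Sum.inl q => sSup (u '' classOf G r q)
  | Sum.inr _ => 0

end Abstraction

/-! ### Auxiliary development -/

open Classical

section Aux
variable (G : ConcGame) (r : Setoid G.S) (u : G.S → ℝ)

lemma expVal_succ (σ1 σ2 : Hist G → G.S → G.A → ℝ) (L : ℕ) (s : G.S) (h : Hist G) :
    expVal G u σ1 σ2 (L + 1) s h =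
      u s + ∑ a1 ∈ G.act1 s, ∑ a2 ∈ G.act2 s,
        σ1 h s a1 * σ2 h s a2 *
          expVal G u σ1 σ2 L (G.tr s a1 a2) (h ++ [(s, a1, a2)]) := rfl

lemma rel_out (s : G.S) : r.r (Quotient.out (Quotient.mk r s)) s :=
  Quotient.exact (Quotient.out_eq _)

/-- uniform strategy -/
noncomputable def unif (act : G.S → Finset G.A) : Hist G → G.S → G.A → ℝ :=
  fun _ s a => if a ∈ act s then ((act s).card : ℝ)⁻¹ else 0

lemma unif_mem_s5 (act : G.S → Finset G.A) (hne : ∀ s, (act s).Nonempty) :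
    unif G act ∈ Strat G act := by
  intro h s
  refine ⟨fun a => ?_, ?_, fun a ha => ?_⟩
  · unfold unif; split
    · positivity
    · exact le_rfl
  · have hcard : ((act s).card : ℝ) ≠ 0 := by
      have := (hne s).card_pos; positivity
    simp only [unif]
    rw [Finset.sum_ite_of_true (fun a ha => ha), Finset.sum_const, nsmul_eq_mul]
    field_simp
  · simp [unif, ha]

lemma strat_nonempty (act : G.S → Finset G.A) (hne : ∀ s, (act s).Nonempty) :
    Nonempty ↥(Strat G act) := ⟨⟨unif G act, unif_mem_s5 G act hne⟩⟩

/-- bound on expVal -/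
lemma expVal_abs_le (C : ℝ) (hC : ∀ s, |u s| ≤ C)
    {σ1 σ2 : Hist G → G.S → G.A → ℝ}
    (h1 : σ1 ∈ Strat G G.act1) (h2 : σ2 ∈ Strat G G.act2) :
    ∀ L s h, |expVal G u σ1 σ2 L s h| ≤ L * C := by
  intro L
  induction L with
  | zero => intro s h; simp [expVal]
  | succ L ih =>
    intro s h
    have hLC : 0 ≤ (L : ℝ) * C := le_trans (abs_nonneg _) (ih s h)
    rw [expVal_succ]
    have key : |∑ a1 ∈ G.act1 s, ∑ a2 ∈ G.act2 s, σ1 h s a1 * σ2 h s a2 *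
        expVal G u σ1 σ2 L (G.tr s a1 a2) (h ++ [(s, a1, a2)])| ≤ L * C := by
      calc _ ≤ ∑ a1 ∈ G.act1 s, |∑ a2 ∈ G.act2 s, σ1 h s a1 * σ2 h s a2 *
            expVal G u σ1 σ2 L (G.tr s a1 a2) (h ++ [(s, a1, a2)])| :=
          Finset.abs_sum_le_sum_abs _ _
        _ ≤ ∑ a1 ∈ G.act1 s, σ1 h s a1 * (L * C) := by
          refine Finset.sum_le_sum fun a1 _ => ?_
          calc _ ≤ ∑ a2 ∈ G.act2 s, |σ1 h s a1 * σ2 h s a2 *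
                expVal G u σ1 σ2 L (G.tr s a1 a2) (h ++ [(s, a1, a2)])| :=
              Finset.abs_sum_le_sum_abs _ _
            _ ≤ ∑ a2 ∈ G.act2 s, σ1 h s a1 * σ2 h s a2 * (L * C) := by
              refine Finset.sum_le_sum fun a2 _ => ?_
              rw [abs_mul, abs_mul, abs_of_nonneg ((h1 h s).1 a1),
                abs_of_nonneg ((h2 h s).1 a2)]
              exact mul_le_mul_of_nonneg_left (ih _ _)
                (mul_nonneg ((h1 h s).1 a1) ((h2 h s).1 a2))
            _ = σ1 h s a1 * (L * C) := by
              have : ∀ a2 ∈ G.act2 s, σ1 h s a1 * σ2 h s a2 * (L * C)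
                  = σ1 h s a1 * (L*C) * σ2 h s a2 := fun a2 _ => by ring
              rw [Finset.sum_congr rfl this, ← Finset.mul_sum, (h2 h s).2.1, mul_one]
        _ = L * C := by
          rw [← Finset.sum_mul, (h1 h s).2.1, one_mul]
    calc |u s + _| ≤ |u s| + _ := abs_add_le _ _
      _ ≤ C + L * C := add_le_add (hC s) key
      _ = (L + 1 : ℕ) * C := by push_cast; ring

end Aux
section Abs2
variable (G : ConcGame) (r : Setoid G.S)

/-- Decoding an abstract history into the real current state and real history. -/
def decStep : G.S × Hist G → (AbsS G r × AbsA G r × AbsA G r) → G.S × Hist G :=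
  fun p e => match e with
  | (Sum.inl _, Sum.inl a1, Sum.inl a2) => (G.tr p.1 a1 a2, p.2 ++ [(p.1, a1, a2)])
  | _ => p

def decode (l : List (AbsS G r × AbsA G r × AbsA G r)) : G.S × Hist G :=
  l.foldl (decStep G r) (G.s0, [])

lemma decode_append (l l' : List (AbsS G r × AbsA G r × AbsA G r)) :
    decode G r (l ++ l') = l'.foldl (decStep G r) (decode G r l) :=
  List.foldl_append ..

/-- lower-game encoding of real histories -/
def encL (h : Hist G) : List (AbsS G r × AbsA G r × AbsA G r) :=
  h.flatMap fun e => [(Sum.inl (Quotient.mk r e.1), Sum.inl e.2.1, Sum.inl e.2.2),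
    (Sum.inr (Quotient.mk r e.1, e.2.1, e.2.2), Sum.inr (Quotient.mk r e.1),
      Sum.inr (Quotient.mk r (G.tr e.1 e.2.1 e.2.2)))]

/-- upper-game encoding of real histories -/
def encU (h : Hist G) : List (AbsS G r × AbsA G r × AbsA G r) :=
  h.flatMap fun e => [(Sum.inl (Quotient.mk r e.1), Sum.inl e.2.1, Sum.inl e.2.2),
    (Sum.inr (Quotient.mk r e.1, e.2.1, e.2.2),
      Sum.inr (Quotient.mk r (G.tr e.1 e.2.1 e.2.2)), Sum.inr (Quotient.mk r e.1))]

lemma encL_append (h : Hist G) (x : G.S × G.A × G.A) :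
    encL G r (h ++ [x]) = encL G r h ++
      [(Sum.inl (Quotient.mk r x.1), Sum.inl x.2.1, Sum.inl x.2.2),
       (Sum.inr (Quotient.mk r x.1, x.2.1, x.2.2), Sum.inr (Quotient.mk r x.1),
        Sum.inr (Quotient.mk r (G.tr x.1 x.2.1 x.2.2)))] := by
  simp [encL]

lemma encU_append (h : Hist G) (x : G.S × G.A × G.A) :
    encU G r (h ++ [x]) = encU G r h ++
      [(Sum.inl (Quotient.mk r x.1), Sum.inl x.2.1, Sum.inl x.2.2),
       (Sum.inr (Quotient.mk r x.1, x.2.1, x.2.2),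
        Sum.inr (Quotient.mk r (G.tr x.1 x.2.1 x.2.2)), Sum.inr (Quotient.mk r x.1))] := by
  simp [encU]

/-- The class chosen at a dummy state by the simulating strategy. -/
noncomputable def dummyTarget (hA : List (AbsS G r × AbsA G r × AbsA G r))
    (d : Quotient r × G.A × G.A) : Quotient r :=
  if Quotient.mk r (decode G r hA).1 ∈ succClasses G r d.1 d.2.1 d.2.2 then
    Quotient.mk r (decode G r hA).1
  else (succClasses_nonempty G r d.1 d.2.1 d.2.2).choose

lemma dummyTarget_mem (hA : List (AbsS G r × AbsA G r × AbsA G r))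
    (d : Quotient r × G.A × G.A) :
    dummyTarget G r hA d ∈ succClasses G r d.1 d.2.1 d.2.2 := by
  unfold dummyTarget; split
  · assumption
  · exact (succClasses_nonempty G r d.1 d.2.1 d.2.2).choose_spec

noncomputable def stateFor (hA : List (AbsS G r × AbsA G r × AbsA G r))
    (q : Quotient r) : G.S :=
  if Quotient.mk r (decode G r hA).1 = q then (decode G r hA).1 else Quotient.out q

lemma stateFor_mk (hA : List (AbsS G r × AbsA G r × AbsA G r)) (q : Quotient r) :
    Quotient.mk r (stateFor G r hA q) = q := by
  unfold stateFor; split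
  · assumption
  · exact Quotient.out_eq q

/-- The abstract strategy simulating a real strategy `σ`. -/
noncomputable def absMimic (σ : Hist G → G.S → G.A → ℝ) :
    List (AbsS G r × AbsA G r × AbsA G r) → AbsS G r → AbsA G r → ℝ :=
  fun hA q b => match q, b with
  | Sum.inl q, Sum.inl a => σ (decode G r hA).2 (stateFor G r hA q) a
  | Sum.inl _, Sum.inr _ => 0
  | Sum.inr d, b => if b = Sum.inr (dummyTarget G r hA d) then 1 else 0

/-- The real strategy simulating an abstract strategy. -/
noncomputable def restrictStrat (σ : List (AbsS G r × AbsA G r × AbsA G r) → AbsS G r → AbsA G r → ℝ)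
    (enc : Hist G → List (AbsS G r × AbsA G r × AbsA G r)) : Hist G → G.S → G.A → ℝ :=
  fun h s a => σ (enc h) (Sum.inl (Quotient.mk r s)) (Sum.inl a)

end Abs2
section Abs3
variable (G : ConcGame) (r : Setoid G.S)

lemma lower_act1_inl (q : Quotient r) :
    (lowerAbs G r).act1 (Sum.inl q) = (G.act1 q.out).image Sum.inl := by
  ext b; simp [lowerAbs]; exact (@Finset.mem_image _ _ (_) _ _ _).trans (@Finset.mem_image _ _ (_) _ _ _).symm

lemma lower_act2_inl (q : Quotient r) :
    (lowerAbs G r).act2 (Sum.inl q) = (G.act2 q.out).image Sum.inl := by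
  ext b; simp [lowerAbs]; exact (@Finset.mem_image _ _ (_) _ _ _).trans (@Finset.mem_image _ _ (_) _ _ _).symm

lemma lower_act1_inr (d : Quotient r × G.A × G.A) :
    (lowerAbs G r).act1 (Sum.inr d) = {Sum.inr d.1} := rfl

lemma lower_act2_inr (d : Quotient r × G.A × G.A) :
    (lowerAbs G r).act2 (Sum.inr d) = (succClasses G r d.1 d.2.1 d.2.2).image Sum.inr := by
  ext b; simp [lowerAbs]; exact (@Finset.mem_image _ _ (_) _ _ _).trans (@Finset.mem_image _ _ (_) _ _ _).symm

lemma upper_act1_inl (q : Quotient r) :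
    (upperAbs G r).act1 (Sum.inl q) = (G.act1 q.out).image Sum.inl := by
  ext b; simp [upperAbs]; exact (@Finset.mem_image _ _ (_) _ _ _).trans (@Finset.mem_image _ _ (_) _ _ _).symm

lemma upper_act2_inl (q : Quotient r) :
    (upperAbs G r).act2 (Sum.inl q) = (G.act2 q.out).image Sum.inl := by
  ext b; simp [upperAbs]; exact (@Finset.mem_image _ _ (_) _ _ _).trans (@Finset.mem_image _ _ (_) _ _ _).symm

lemma upper_act2_inr (d : Quotient r × G.A × G.A) :
    (upperAbs G r).act2 (Sum.inr d) = {Sum.inr d.1} := rfl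

lemma upper_act1_inr (d : Quotient r × G.A × G.A) :
    (upperAbs G r).act1 (Sum.inr d) = (succClasses G r d.1 d.2.1 d.2.2).image Sum.inr := by
  ext b; simp [upperAbs]; exact (@Finset.mem_image _ _ (_) _ _ _).trans (@Finset.mem_image _ _ (_) _ _ _).symm

lemma absMimic_mem_gen (act : G.S → Finset G.A)
    (hact : ∀ s s', r.r s s' → act s = act s')
    (σ : Hist G → G.S → G.A → ℝ) (hσ : σ ∈ Strat G act)
    (A : AbsS G r → Finset (AbsA G r))
    (hAl : ∀ q, A (Sum.inl q) = (act q.out).image Sum.inl)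
    (hAr : ∀ d, A (Sum.inr d) = (succClasses G r d.1 d.2.1 d.2.2).image Sum.inr) :
    ∀ (hA : List (AbsS G r × AbsA G r × AbsA G r)) (x : AbsS G r),
      (∀ b, 0 ≤ absMimic G r σ hA x b) ∧
      (∑ b ∈ A x, absMimic G r σ hA x b = 1) ∧
      ∀ b ∉ A x, absMimic G r σ hA x b = 0 := by
  intro hA x
  match x with
  | Sum.inl q =>
    have hrel : r.r (stateFor G r hA q) q.out :=
      Quotient.exact (by rw [stateFor_mk, Quotient.out_eq])
    have hacteq : act (stateFor G r hA q) = act q.out := hact _ _ hrel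
    refine ⟨fun b => ?_, ?_, fun b hb => ?_⟩
    · match b with
      | Sum.inl a => exact (hσ (decode G r hA).2 (stateFor G r hA q)).1 a
      | Sum.inr _ => exact le_rfl
    · rw [hAl, Finset.sum_image (fun _ _ _ _ h => Sum.inl_injective h)]
      show ∑ a ∈ act q.out, σ (decode G r hA).2 (stateFor G r hA q) a = 1
      rw [← hacteq]
      exact (hσ (decode G r hA).2 (stateFor G r hA q)).2.1
    · match b with
      | Sum.inl a =>
        have : a ∉ act q.out := by
          intro hmem; exact hb (by rw [hAl]; exact Finset.mem_image_of_mem _ hmem)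
        exact (hσ (decode G r hA).2 (stateFor G r hA q)).2.2 a (hacteq ▸ this)
      | Sum.inr _ => rfl
  | Sum.inr d =>
    refine ⟨fun b => ?_, ?_, fun b hb => ?_⟩
    · show (0:ℝ) ≤ if b = Sum.inr (dummyTarget G r hA d) then 1 else 0
      split <;> norm_num
    · rw [hAr, Finset.sum_image (fun _ _ _ _ h => Sum.inr_injective h)]
      show (∑ p ∈ succClasses G r d.1 d.2.1 d.2.2,
        if Sum.inr p = Sum.inr (dummyTarget G r hA d) then (1:ℝ) else 0) = 1
      have : ∀ p ∈ succClasses G r d.1 d.2.1 d.2.2,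
          (if Sum.inr p = (Sum.inr (dummyTarget G r hA d) : AbsA G r) then (1:ℝ) else 0)
          = if p = dummyTarget G r hA d then (1:ℝ) else 0 := by
        intro p _; simp [Sum.inr.injEq]
      rw [Finset.sum_congr rfl this, Finset.sum_ite_eq' (succClasses G r d.1 d.2.1 d.2.2)
        (dummyTarget G r hA d) (fun _ => (1:ℝ)), if_pos (dummyTarget_mem G r hA d)]
    · show (if b = Sum.inr (dummyTarget G r hA d) then (1:ℝ) else 0) = 0
      rw [if_neg]
      intro hbe; subst hbe
      exact hb (by rw [hAr]; exact Finset.mem_image_of_mem _ (dummyTarget_mem G r hA d))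

lemma restrictStrat_mem_gen (act : G.S → Finset G.A)
    (hact : ∀ s s', r.r s s' → act s = act s')
    (σ : List (AbsS G r × AbsA G r × AbsA G r) → AbsS G r → AbsA G r → ℝ)
    (A : AbsS G r → Finset (AbsA G r))
    (hAl : ∀ q, A (Sum.inl q) = (act q.out).image Sum.inl)
    (hσ : ∀ (hA : List (AbsS G r × AbsA G r × AbsA G r)) (x : AbsS G r),
      (∀ b, 0 ≤ σ hA x b) ∧ (∑ b ∈ A x, σ hA x b = 1) ∧ ∀ b ∉ A x, σ hA x b = 0)
    (enc : Hist G → List (AbsS G r × AbsA G r × AbsA G r)) :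
    restrictStrat G r σ enc ∈ Strat G act := by
  intro h s
  have hacteq : act (Quotient.out (Quotient.mk r s)) = act s := hact _ _ (rel_out G r s)
  refine ⟨fun a => (hσ (enc h) (Sum.inl (Quotient.mk r s))).1 (Sum.inl a), ?_, fun a ha => ?_⟩
  · have := (hσ (enc h) (Sum.inl (Quotient.mk r s))).2.1
    rw [hAl, Finset.sum_image (fun _ _ _ _ h => Sum.inl_injective h), hacteq] at this
    exact this
  · refine (hσ (enc h) (Sum.inl (Quotient.mk r s))).2.2 (Sum.inl a) ?_
    rw [hAl]
    simp only [Finset.mem_image, Sum.inl.injEq, not_exists]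
    rintro a' ⟨ha', rfl⟩
    exact ha (hacteq ▸ ha')

end Abs3
section Main
variable (G : ConcGame) (r : Setoid G.S)

lemma succClasses_mem (s : G.S) (a1 a2 : G.A) :
    Quotient.mk r (G.tr s a1 a2) ∈ succClasses G r (Quotient.mk r s) a1 a2 := by
  unfold succClasses
  simp only [Finset.mem_image, Finset.mem_filter, Finset.mem_univ, true_and]
  exact ⟨s, rfl, rfl⟩

lemma sum_image_inl (t : Finset G.A) (f : AbsA G r → ℝ) :
    ∑ b ∈ t.image Sum.inl, f b = ∑ a ∈ t, f (Sum.inl a) :=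
  Finset.sum_image (fun _ _ _ _ hh => Sum.inl_injective hh)

lemma sum_image_inr (t : Finset (Quotient r)) (f : AbsA G r → ℝ) :
    ∑ b ∈ t.image Sum.inr, f b = ∑ p ∈ t, f (Sum.inr p) :=
  Finset.sum_image (fun _ _ _ _ hh => Sum.inr_injective hh)

lemma lower_main (u : G.S → ℝ) (hc : Compatible G r)
    {σ1A : Hist (lowerAbs G r) → (lowerAbs G r).S → (lowerAbs G r).A → ℝ}
    {σ2 : Hist G → G.S → G.A → ℝ}
    (hσ1 : σ1A ∈ Strat (lowerAbs G r) ((lowerAbs G r).act1))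
    (hσ2 : σ2 ∈ Strat G G.act2) :
    ∀ (L : ℕ) (h : Hist G) (s : G.S), decode G r (encL G r h) = (s, h) →
      expVal (lowerAbs G r) (lowerU G r u) σ1A (absMimic G r σ2) (2*L)
        (Sum.inl (Quotient.mk r s)) (encL G r h)
      ≤ expVal G u (restrictStrat G r σ1A (encL G r)) σ2 L s h := by
  intro L
  induction L with
  | zero => intro h s _; simp [expVal]
  | succ L ih =>
    intro h s hdec
    have hact1 : G.act1 (Quotient.out (Quotient.mk r s)) = G.act1 s :=
      (hc _ _ (rel_out G r s)).1
    have hact2 : G.act2 (Quotient.out (Quotient.mk r s)) = G.act2 s :=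
      (hc _ _ (rel_out G r s)).2
    have h2L : 2*(L+1) = (2*L+1)+1 := by ring
    rw [h2L, expVal_succ]; erw [expVal_succ (lowerAbs G r) (lowerU G r u) σ1A (absMimic G r σ2) (2*L+1) (Sum.inl (Quotient.mk r s)) (encL G r h)]
    refine add_le_add ?_ ?_
    · show lowerU G r u (Sum.inl (Quotient.mk r s)) ≤ u s
      have heq : lowerU G r u (Sum.inl (Quotient.mk r s)) =
          sInf (u '' classOf G r (Quotient.mk r s)) := rfl
      rw [heq]
      exact csInf_le (Set.Finite.bddBelow (Set.toFinite _)) ⟨s, rfl, rfl⟩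
    · have e1 : (lowerAbs G r).act1 (Sum.inl (Quotient.mk r s))
          = (G.act1 s).image Sum.inl := by rw [lower_act1_inl, hact1]
      have e2 : (lowerAbs G r).act2 (Sum.inl (Quotient.mk r s))
          = (G.act2 s).image Sum.inl := by rw [lower_act2_inl, hact2]
      rw [e1, e2]
      refine le_trans (le_of_eq ((sum_image_inl G r (G.act1 s) _).trans
        (Finset.sum_congr rfl fun a1 _ => sum_image_inl G r (G.act2 s) _))) ?_
      refine Finset.sum_le_sum fun a1 ha1 => Finset.sum_le_sum fun a2 ha2 => ?_
      have hmk : Quotient.mk r (decode G r (encL G r h)).1 = Quotient.mk r s := by rw [hdec]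
      have hmimic : absMimic G r σ2 (encL G r h) (Sum.inl (Quotient.mk r s)) (Sum.inl a2)
          = σ2 h s a2 := by
        show σ2 (decode G r (encL G r h)).2 (stateFor G r (encL G r h) (Quotient.mk r s)) a2
          = σ2 h s a2
        unfold stateFor
        rw [if_pos hmk, hdec]
      rw [hmimic]
      have htr : (lowerAbs G r).tr (Sum.inl (Quotient.mk r s)) (Sum.inl a1) (Sum.inl a2)
          = Sum.inr (Quotient.mk r s, a1, a2) := rfl
      rw [htr]
      have hco : restrictStrat G r σ1A (encL G r) h s a1
          = σ1A (encL G r h) (Sum.inl (Quotient.mk r s)) (Sum.inl a1) := rfl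
      rw [hco]
      refine mul_le_mul_of_nonneg_left ?_
        (mul_nonneg ((hσ1 (encL G r h) _).1 _) ((hσ2 h s).1 a2))
      -- the dummy step
      set hA1 := encL G r h ++ [(Sum.inl (Quotient.mk r s), Sum.inl a1, Sum.inl a2)] with hhA1
      have hdec1 : decode G r hA1 = (G.tr s a1 a2, h ++ [(s, a1, a2)]) := by
        rw [hhA1, decode_append, hdec]; rfl
      have hdec2 : decode G r (encL G r (h ++ [(s, a1, a2)]))
          = (G.tr s a1 a2, h ++ [(s, a1, a2)]) := by
        rw [encL_append, decode_append, hdec]; rfl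
      have htarget : dummyTarget G r hA1 (Quotient.mk r s, a1, a2)
          = Quotient.mk r (G.tr s a1 a2) := by
        unfold dummyTarget
        rw [hdec1]
        exact if_pos (succClasses_mem G r s a1 a2)
      have hσ1one : σ1A hA1 (Sum.inr (Quotient.mk r s, a1, a2))
          (Sum.inr (Quotient.mk r s)) = 1 := by
        have h1 := (hσ1 hA1 (Sum.inr (Quotient.mk r s, a1, a2))).2.1
        erw [lower_act1_inr, Finset.sum_singleton] at h1
        exact h1
      have hdummy : expVal (lowerAbs G r) (lowerU G r u) σ1A (absMimic G r σ2) (2*L+1)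
          (Sum.inr (Quotient.mk r s, a1, a2)) hA1
          = expVal (lowerAbs G r) (lowerU G r u) σ1A (absMimic G r σ2) (2*L)
            (Sum.inl (Quotient.mk r (G.tr s a1 a2))) (encL G r (h ++ [(s, a1, a2)])) := by
        erw [expVal_succ (lowerAbs G r) (lowerU G r u) σ1A (absMimic G r σ2) (2*L) (Sum.inr (Quotient.mk r s, a1, a2)) hA1, lower_act1_inr, Finset.sum_singleton, lower_act2_inr]
        have hz : lowerU G r u (Sum.inr (Quotient.mk r s, a1, a2)) = 0 := rfl
        rw [hz, zero_add]
        refine Eq.trans (sum_image_inr G r _ _) ?_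
        have hterm : ∀ p ∈ succClasses G r (Quotient.mk r s) a1 a2,
            σ1A hA1 (Sum.inr (Quotient.mk r s, a1, a2)) (Sum.inr (Quotient.mk r s)) *
              absMimic G r σ2 hA1 (Sum.inr (Quotient.mk r s, a1, a2)) (Sum.inr p) *
              expVal (lowerAbs G r) (lowerU G r u) σ1A (absMimic G r σ2) (2*L)
                ((lowerAbs G r).tr (Sum.inr (Quotient.mk r s, a1, a2))
                  (Sum.inr (Quotient.mk r s)) (Sum.inr p))
                (hA1 ++ [(Sum.inr (Quotient.mk r s, a1, a2), Sum.inr (Quotient.mk r s), Sum.inr p)])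
            = if p = Quotient.mk r (G.tr s a1 a2) then
                expVal (lowerAbs G r) (lowerU G r u) σ1A (absMimic G r σ2) (2*L)
                  (Sum.inl p)
                  (hA1 ++ [(Sum.inr (Quotient.mk r s, a1, a2), Sum.inr (Quotient.mk r s), Sum.inr p)])
              else 0 := by
          intro p _
          have hmv : absMimic G r σ2 hA1 (Sum.inr (Quotient.mk r s, a1, a2)) (Sum.inr p)
              = if p = Quotient.mk r (G.tr s a1 a2) then 1 else 0 := by
            show (if (Sum.inr p : AbsA G r)
                = Sum.inr (dummyTarget G r hA1 (Quotient.mk r s, a1, a2)) then (1:ℝ) else 0) = _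
            rw [htarget]
            by_cases hp : p = Quotient.mk r (G.tr s a1 a2)
            · rw [if_pos hp, if_pos (by rw [hp])]
            · rw [if_neg hp, if_neg (fun hh => hp (Sum.inr_injective hh))]
          have htr2 : (lowerAbs G r).tr (Sum.inr (Quotient.mk r s, a1, a2))
              (Sum.inr (Quotient.mk r s)) (Sum.inr p) = Sum.inl p := rfl
          rw [hmv, htr2, hσ1one]
          split <;> ring
        erw [Finset.sum_congr rfl hterm]
        rw [Finset.sum_eq_single_of_mem (Quotient.mk r (G.tr s a1 a2))
          (succClasses_mem G r s a1 a2) (fun p _ hne => if_neg hne), if_pos rfl]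
        congr 1
        rw [hhA1, encL_append]
        simp; exact List.append_assoc _ _ _
      erw [hdummy]
      exact ih (h ++ [(s, a1, a2)]) (G.tr s a1 a2) hdec2

lemma upper_main (u : G.S → ℝ) (hc : Compatible G r)
    {σ1 : Hist G → G.S → G.A → ℝ}
    {σ2A : Hist (upperAbs G r) → (upperAbs G r).S → (upperAbs G r).A → ℝ}
    (hσ1 : σ1 ∈ Strat G G.act1)
    (hσ2 : σ2A ∈ Strat (upperAbs G r) ((upperAbs G r).act2)) :
    ∀ (L : ℕ) (h : Hist G) (s : G.S), decode G r (encU G r h) = (s, h) →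
      expVal G u σ1 (restrictStrat G r σ2A (encU G r)) L s h
      ≤ expVal (upperAbs G r) (upperU G r u) (absMimic G r σ1) σ2A (2*L)
        (Sum.inl (Quotient.mk r s)) (encU G r h) := by
  intro L
  induction L with
  | zero => intro h s _; simp [expVal]
  | succ L ih =>
    intro h s hdec
    have hact1 : G.act1 (Quotient.out (Quotient.mk r s)) = G.act1 s :=
      (hc _ _ (rel_out G r s)).1
    have hact2 : G.act2 (Quotient.out (Quotient.mk r s)) = G.act2 s :=
      (hc _ _ (rel_out G r s)).2
    have h2L : 2*(L+1) = (2*L+1)+1 := by ring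
    erw [h2L, expVal_succ, expVal_succ (upperAbs G r) (upperU G r u) (absMimic G r σ1) σ2A (2*L+1) (Sum.inl (Quotient.mk r s)) (encU G r h)]
    refine add_le_add ?_ ?_
    · show u s ≤ upperU G r u (Sum.inl (Quotient.mk r s))
      have heq : upperU G r u (Sum.inl (Quotient.mk r s)) =
          sSup (u '' classOf G r (Quotient.mk r s)) := rfl
      rw [heq]
      exact le_csSup (Set.Finite.bddAbove (Set.toFinite _)) ⟨s, rfl, rfl⟩
    · have e1 : (upperAbs G r).act1 (Sum.inl (Quotient.mk r s))
          = (G.act1 s).image Sum.inl := by rw [upper_act1_inl, hact1]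
      have e2 : (upperAbs G r).act2 (Sum.inl (Quotient.mk r s))
          = (G.act2 s).image Sum.inl := by rw [upper_act2_inl, hact2]
      rw [e1, e2]
      refine le_trans ?_ (le_of_eq ((sum_image_inl G r (G.act1 s) _).trans
        (Finset.sum_congr rfl fun a1 _ => sum_image_inl G r (G.act2 s) _)).symm)
      refine Finset.sum_le_sum fun a1 ha1 => Finset.sum_le_sum fun a2 ha2 => ?_
      have hmk : Quotient.mk r (decode G r (encU G r h)).1 = Quotient.mk r s := by rw [hdec]
      have hmimic : absMimic G r σ1 (encU G r h) (Sum.inl (Quotient.mk r s)) (Sum.inl a1)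
          = σ1 h s a1 := by
        show σ1 (decode G r (encU G r h)).2 (stateFor G r (encU G r h) (Quotient.mk r s)) a1
          = σ1 h s a1
        unfold stateFor
        rw [if_pos hmk, hdec]
      rw [hmimic]
      have htr : (upperAbs G r).tr (Sum.inl (Quotient.mk r s)) (Sum.inl a1) (Sum.inl a2)
          = Sum.inr (Quotient.mk r s, a1, a2) := rfl
      rw [htr]
      have hco : restrictStrat G r σ2A (encU G r) h s a2
          = σ2A (encU G r h) (Sum.inl (Quotient.mk r s)) (Sum.inl a2) := rfl
      rw [hco]
      refine mul_le_mul_of_nonneg_left ?_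
        (mul_nonneg ((hσ1 h s).1 a1) ((hσ2 (encU G r h) _).1 _))
      -- the dummy step
      set hA1 := encU G r h ++ [(Sum.inl (Quotient.mk r s), Sum.inl a1, Sum.inl a2)] with hhA1
      have hdec1 : decode G r hA1 = (G.tr s a1 a2, h ++ [(s, a1, a2)]) := by
        rw [hhA1, decode_append, hdec]; rfl
      have hdec2 : decode G r (encU G r (h ++ [(s, a1, a2)]))
          = (G.tr s a1 a2, h ++ [(s, a1, a2)]) := by
        rw [encU_append, decode_append, hdec]; rfl
      have htarget : dummyTarget G r hA1 (Quotient.mk r s, a1, a2)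
          = Quotient.mk r (G.tr s a1 a2) := by
        unfold dummyTarget
        rw [hdec1]
        exact if_pos (succClasses_mem G r s a1 a2)
      have hσ2one : σ2A hA1 (Sum.inr (Quotient.mk r s, a1, a2))
          (Sum.inr (Quotient.mk r s)) = 1 := by
        have h1 := (hσ2 hA1 (Sum.inr (Quotient.mk r s, a1, a2))).2.1
        erw [upper_act2_inr, Finset.sum_singleton] at h1
        exact h1
      have hdummy : expVal (upperAbs G r) (upperU G r u) (absMimic G r σ1) σ2A (2*L+1)
          (Sum.inr (Quotient.mk r s, a1, a2)) hA1
          = expVal (upperAbs G r) (upperU G r u) (absMimic G r σ1) σ2A (2*L)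
            (Sum.inl (Quotient.mk r (G.tr s a1 a2))) (encU G r (h ++ [(s, a1, a2)])) := by
        erw [expVal_succ (upperAbs G r) (upperU G r u) (absMimic G r σ1) σ2A (2*L) (Sum.inr (Quotient.mk r s, a1, a2)) hA1, upper_act1_inr]
        have hz : upperU G r u (Sum.inr (Quotient.mk r s, a1, a2)) = 0 := rfl
        rw [hz, zero_add]
        refine Eq.trans (sum_image_inr G r _ _) ?_
        have hterm : ∀ p ∈ succClasses G r (Quotient.mk r s) a1 a2,
            (∑ b2 ∈ (upperAbs G r).act2 (Sum.inr (Quotient.mk r s, a1, a2)),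
              absMimic G r σ1 hA1 (Sum.inr (Quotient.mk r s, a1, a2)) (Sum.inr p) *
              σ2A hA1 (Sum.inr (Quotient.mk r s, a1, a2)) b2 *
              expVal (upperAbs G r) (upperU G r u) (absMimic G r σ1) σ2A (2*L)
                ((upperAbs G r).tr (Sum.inr (Quotient.mk r s, a1, a2)) (Sum.inr p) b2)
                (hA1 ++ [(Sum.inr (Quotient.mk r s, a1, a2), Sum.inr p, b2)]))
            = if p = Quotient.mk r (G.tr s a1 a2) then
                expVal (upperAbs G r) (upperU G r u) (absMimic G r σ1) σ2A (2*L)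
                  (Sum.inl p)
                  (hA1 ++ [(Sum.inr (Quotient.mk r s, a1, a2), Sum.inr p,
                    Sum.inr (Quotient.mk r s))])
              else 0 := by
          intro p _
          erw [upper_act2_inr, Finset.sum_singleton]
          have hmv : absMimic G r σ1 hA1 (Sum.inr (Quotient.mk r s, a1, a2)) (Sum.inr p)
              = if p = Quotient.mk r (G.tr s a1 a2) then 1 else 0 := by
            show (if (Sum.inr p : AbsA G r)
                = Sum.inr (dummyTarget G r hA1 (Quotient.mk r s, a1, a2)) then (1:ℝ) else 0) = _
            rw [htarget]
            by_cases hp : p = Quotient.mk r (G.tr s a1 a2)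
            · rw [if_pos hp, if_pos (by rw [hp])]
            · rw [if_neg hp, if_neg (fun hh => hp (Sum.inr_injective hh))]
          have htr2 : (upperAbs G r).tr (Sum.inr (Quotient.mk r s, a1, a2))
              (Sum.inr p) (Sum.inr (Quotient.mk r s)) = Sum.inl p := rfl
          rw [hmv, htr2, hσ2one]
          split <;> ring_nf <;> rfl
        erw [Finset.sum_congr rfl hterm]
        rw [Finset.sum_eq_single_of_mem (Quotient.mk r (G.tr s a1 a2))
          (succClasses_mem G r s a1 a2) (fun p _ hne => if_neg hne), if_pos rfl]
        congr 1
        rw [hhA1, encU_append]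
        simp; exact List.append_assoc _ _ _
      erw [hdummy]
      exact ih (h ++ [(s, a1, a2)]) (G.tr s a1 a2) hdec2

end Main
section Plumbing
variable (G : ConcGame) (r : Setoid G.S)

lemma absMimic_mem_lower (hc : Compatible G r) {σ : Hist G → G.S → G.A → ℝ}
    (hσ : σ ∈ Strat G G.act2) :
    absMimic G r σ ∈ Strat (lowerAbs G r) ((lowerAbs G r).act2) :=
  fun h x => absMimic_mem_gen G r G.act2 (fun s s' hr => (hc s s' hr).2) σ hσ
    ((lowerAbs G r).act2) (lower_act2_inl G r) (lower_act2_inr G r) h x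

lemma absMimic_mem_upper (hc : Compatible G r) {σ : Hist G → G.S → G.A → ℝ}
    (hσ : σ ∈ Strat G G.act1) :
    absMimic G r σ ∈ Strat (upperAbs G r) ((upperAbs G r).act1) :=
  fun h x => absMimic_mem_gen G r G.act1 (fun s s' hr => (hc s s' hr).1) σ hσ
    ((upperAbs G r).act1) (upper_act1_inl G r) (upper_act1_inr G r) h x

lemma restrict_mem_lower (hc : Compatible G r)
    {σ1A : Hist (lowerAbs G r) → (lowerAbs G r).S → (lowerAbs G r).A → ℝ}
    (hσ1 : σ1A ∈ Strat (lowerAbs G r) ((lowerAbs G r).act1)) :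
    restrictStrat G r σ1A (encL G r) ∈ Strat G G.act1 :=
  restrictStrat_mem_gen G r G.act1 (fun s s' hr => (hc s s' hr).1) σ1A
    ((lowerAbs G r).act1) (lower_act1_inl G r) hσ1 (encL G r)

lemma restrict_mem_upper (hc : Compatible G r)
    {σ2A : Hist (upperAbs G r) → (upperAbs G r).S → (upperAbs G r).A → ℝ}
    (hσ2 : σ2A ∈ Strat (upperAbs G r) ((upperAbs G r).act2)) :
    restrictStrat G r σ2A (encU G r) ∈ Strat G G.act2 :=
  restrictStrat_mem_gen G r G.act2 (fun s s' hr => (hc s s' hr).2) σ2A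
    ((upperAbs G r).act2) (upper_act2_inl G r) hσ2 (encU G r)

variable (u : G.S → ℝ)

/-- A uniform bound on the utility. -/
noncomputable def uBound : ℝ :=
  Finset.univ.sup' ⟨G.s0, Finset.mem_univ _⟩ (fun s => |u s|)

lemma uBound_spec : ∀ s, |u s| ≤ uBound G u := by
  intro s
  unfold uBound
  exact Finset.le_sup' (fun s => |u s|) (Finset.mem_univ s)

lemma lowerU_bound : ∀ x, |lowerU G r u x| ≤ uBound G u := by
  rintro (q | d)
  · have hne : (u '' classOf G r q).Nonempty :=
      ⟨u q.out, ⟨q.out, Quotient.out_eq q, rfl⟩⟩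
    have hmem := hne.csInf_mem (Set.toFinite _)
    obtain ⟨t, -, ht⟩ := hmem
    show |sInf (u '' classOf G r q)| ≤ _
    rw [← ht]
    exact uBound_spec G u t
  · show |(0:ℝ)| ≤ _
    simpa using (abs_nonneg (u G.s0)).trans (uBound_spec G u G.s0)

lemma upperU_bound : ∀ x, |upperU G r u x| ≤ uBound G u := by
  rintro (q | d)
  · have hne : (u '' classOf G r q).Nonempty :=
      ⟨u q.out, ⟨q.out, Quotient.out_eq q, rfl⟩⟩
    have hmem := hne.csSup_mem (Set.toFinite _)
    obtain ⟨t, -, ht⟩ := hmem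
    show |sSup (u '' classOf G r q)| ≤ _
    rw [← ht]
    exact uBound_spec G u t
  · show |(0:ℝ)| ≤ _
    simpa using (abs_nonneg (u G.s0)).trans (uBound_spec G u G.s0)

end Plumbing

section Assembly
variable (G : ConcGame) (u : G.S → ℝ) (C : ℝ)

lemma bdd_below_inner (hC : ∀ s, |u s| ≤ C)
    {σ1 : Hist G → G.S → G.A → ℝ} (hσ1 : σ1 ∈ Strat G G.act1) (L : ℕ) (s : G.S) (h : Hist G) :
    BddBelow (Set.range fun σ2 : ↥(Strat G G.act2) => expVal G u σ1 σ2.1 L s h) := by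
  refine ⟨-(L * C), ?_⟩
  rintro _ ⟨σ2, rfl⟩
  exact (abs_le.1 (expVal_abs_le G u C hC hσ1 σ2.2 L s h)).1

lemma inf_le_bound (hC : ∀ s, |u s| ≤ C)
    {σ1 : Hist G → G.S → G.A → ℝ} (hσ1 : σ1 ∈ Strat G G.act1) (L : ℕ) (s : G.S) (h : Hist G) :
    (⨅ σ2 : ↥(Strat G G.act2), expVal G u σ1 σ2.1 L s h) ≤ L * C :=
  le_trans (ciInf_le (bdd_below_inner G u C hC hσ1 L s h)
      ⟨unif G G.act2, unif_mem_s5 G G.act2 G.h2⟩)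
    ((abs_le.1 (expVal_abs_le G u C hC hσ1 (unif_mem_s5 G G.act2 G.h2) L s h)).2)

lemma bdd_above_outer (hC : ∀ s, |u s| ≤ C) (L : ℕ) (s : G.S) (h : Hist G) :
    BddAbove (Set.range fun σ1 : ↥(Strat G G.act1) =>
      ⨅ σ2 : ↥(Strat G G.act2), expVal G u σ1.1 σ2.1 L s h) := by
  refine ⟨L * C, ?_⟩
  rintro _ ⟨σ1, rfl⟩
  exact inf_le_bound G u C hC σ1.2 L s h

end Assembly
/-- Soundness of abstraction: for a compatible partition, the `2L`-step value of
the lower abstraction is a lower bound, and the `2L`-step value of the upper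
abstraction an upper bound, on the `L`-step value of the original game. -/
theorem abstraction_soundness (G : ConcGame) (u : G.S → ℝ) (r : Setoid G.S)
    (hc : Compatible G r) (L : ℕ) :
    gval (lowerAbs G r) (lowerU G r u) (2 * L) ≤ gval G u L ∧
    gval G u L ≤ gval (upperAbs G r) (upperU G r u) (2 * L) := by
  haveI hne1 : Nonempty ↥(Strat G G.act1) := strat_nonempty G G.act1 G.h1
  haveI hne2 : Nonempty ↥(Strat G G.act2) := strat_nonempty G G.act2 G.h2
  haveI hneL1 : Nonempty ↥(Strat (lowerAbs G r) ((lowerAbs G r).act1)) :=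
    strat_nonempty _ _ (lowerAbs G r).h1
  haveI hneL2 : Nonempty ↥(Strat (lowerAbs G r) ((lowerAbs G r).act2)) :=
    strat_nonempty _ _ (lowerAbs G r).h2
  haveI hneU1 : Nonempty ↥(Strat (upperAbs G r) ((upperAbs G r).act1)) :=
    strat_nonempty _ _ (upperAbs G r).h1
  haveI hneU2 : Nonempty ↥(Strat (upperAbs G r) ((upperAbs G r).act2)) :=
    strat_nonempty _ _ (upperAbs G r).h2
  have hC := uBound_spec G u
  have hCL := lowerU_bound G r u
  have hCU := upperU_bound G r u
  constructor
  · refine ciSup_le fun σ1A => ?_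
    refine le_trans (le_ciInf fun (σ2 : ↥(Strat G G.act2)) => le_trans
      (ciInf_le (bdd_below_inner (lowerAbs G r) (lowerU G r u) (uBound G u) hCL σ1A.2
          (2*L) (lowerAbs G r).s0 [])
        ⟨absMimic G r σ2.1, absMimic_mem_lower G r hc σ2.2⟩)
      (lower_main G r u hc σ1A.2 σ2.2 L [] G.s0 rfl)) ?_
    exact le_ciSup (bdd_above_outer G u (uBound G u) hC L G.s0 [])
      ⟨restrictStrat G r σ1A.1 (encL G r), restrict_mem_lower G r hc σ1A.2⟩
  · refine ciSup_le fun σ1 => ?_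
    refine le_trans (le_ciInf fun (σ2A : ↥(Strat (upperAbs G r) ((upperAbs G r).act2))) => le_trans
      (ciInf_le (bdd_below_inner G u (uBound G u) hC σ1.2 L G.s0 [])
        ⟨restrictStrat G r σ2A.1 (encU G r), restrict_mem_upper G r hc σ2A.2⟩)
      (upper_main G r u hc σ1.2 σ2A.2 L [] G.s0 rfl)) ?_
    exact le_ciSup (bdd_above_outer (upperAbs G r) (upperU G r u) (uBound G u) hCU
        (2*L) (upperAbs G r).s0 [])
      ⟨absMimic G r σ1.1, absMimic_mem_upper G r hc σ1.2⟩
end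

section
/- Refinement property of game abstraction: Let (G, u) be a finite concurrent two-player zero-sum game and Π1, Π2 two partitions of its state space compatible with action sets, with Π2 a refinement of Π1 (every set of Π1 is a union of sets of Π2). Let (Gi↓, ui↓), (Gi↑, ui↑) be the lower and upper abstractions with respect to Πi. Then for every L: υ_{2L}(G1↓, u1↓) ≤ υ_{2L}(G2↓, u2↓) ≤ υ_{2L}(G2↑, u2↑) ≤ υ_{2L}(G1↑, u1↑). -/
open scoped BigOperators

noncomputable section
namespace GameAux
open Classical

variable (G : ConcGame)

/-- Mixed one-shot distributions supported on `F`. -/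
def Mix (F : Finset G.A) : Set (G.A → ℝ) :=
  {x | (∀ a, 0 ≤ x a) ∧ (∑ a ∈ F, x a = 1) ∧ ∀ a ∉ F, x a = 0}

def mixUnif (F : Finset G.A) : G.A → ℝ := fun a => if a ∈ F then (F.card : ℝ)⁻¹ else 0

lemma mixUnif_mem {F : Finset G.A} (hF : F.Nonempty) : mixUnif G F ∈ Mix G F := by
  have hcard : (0:ℝ) < F.card := by exact_mod_cast Finset.card_pos.mpr hF
  refine ⟨fun a => ?_, ?_, fun a ha => if_neg ha⟩
  · unfold mixUnif; split <;> positivity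
  · unfold mixUnif
    rw [Finset.sum_ite_mem, Finset.inter_self, Finset.sum_const, nsmul_eq_mul,
      mul_inv_cancel₀ (ne_of_gt hcard)]

lemma mix_nonempty {F : Finset G.A} (hF : F.Nonempty) : (Mix G F).Nonempty :=
  ⟨_, mixUnif_mem G hF⟩

lemma mixSum_le {F : Finset G.A} {x : G.A → ℝ} (hx : x ∈ Mix G F) {c : G.A → ℝ} {M : ℝ}
    (hc : ∀ a ∈ F, c a ≤ M) : ∑ a ∈ F, x a * c a ≤ M := by
  calc ∑ a ∈ F, x a * c a ≤ ∑ a ∈ F, x a * M := by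
        refine Finset.sum_le_sum fun a ha => mul_le_mul_of_nonneg_left (hc a ha) (hx.1 a)
    _ = M := by rw [← Finset.sum_mul, hx.2.1, one_mul]

lemma le_mixSum {F : Finset G.A} {x : G.A → ℝ} (hx : x ∈ Mix G F) {c : G.A → ℝ} {M : ℝ}
    (hc : ∀ a ∈ F, M ≤ c a) : M ≤ ∑ a ∈ F, x a * c a := by
  calc M = ∑ a ∈ F, x a * M := by rw [← Finset.sum_mul, hx.2.1, one_mul]
    _ ≤ ∑ a ∈ F, x a * c a := by
        refine Finset.sum_le_sum fun a ha => mul_le_mul_of_nonneg_left (hc a ha) (hx.1 a)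

lemma strat_iff (act : G.S → Finset G.A) (σ : Hist G → G.S → G.A → ℝ) :
    σ ∈ Strat G act ↔ ∀ h s, σ h s ∈ Mix G (act s) := Iff.rfl

lemma strat_nonempty (act : G.S → Finset G.A) (hact : ∀ s, (act s).Nonempty) :
    (Strat G act).Nonempty :=
  ⟨fun _ s => mixUnif G (act s), fun _ s => mixUnif_mem G (hact s)⟩

/-- Dynamic-programming (backward induction) lower value. -/
def dpVal (u : G.S → ℝ) : ℕ → G.S → ℝ
  | 0, _ => 0
  | (L+1), s => u s + ⨆ x : Mix G (G.act1 s),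
      (G.act2 s).inf' (G.h2 s)
        (fun a2 => ∑ a1 ∈ G.act1 s, x.1 a1 * dpVal u L (G.tr s a1 a2))

variable {G}

lemma dpVal_bound {u : G.S → ℝ} {M : ℝ} (hM : ∀ s, |u s| ≤ M) :
    ∀ L s, |dpVal G u L s| ≤ L * M := by
  intro L
  induction L with
  | zero => intro s; simp [dpVal]
  | succ L ih =>
    intro s
    have hM0 : 0 ≤ M := le_trans (abs_nonneg _) (hM s)
    have hbound : ∀ x : Mix G (G.act1 s),
        |(G.act2 s).inf' (G.h2 s)
          (fun a2 => ∑ a1 ∈ G.act1 s, x.1 a1 * dpVal G u L (G.tr s a1 a2))| ≤ L * M := by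
      intro x
      rw [abs_le]
      constructor
      · refine Finset.le_inf' _ _ fun a2 _ => le_mixSum G x.2 fun a1 _ => ?_
        exact neg_le_of_abs_le (ih _)
      · obtain ⟨b2, hb2⟩ := G.h2 s
        refine le_trans (Finset.inf'_le _ hb2) (mixSum_le G x.2 fun a1 _ => ?_)
        exact le_of_abs_le (ih _)
    have hs : Nonempty (Mix G (G.act1 s)) := (mix_nonempty G (G.h1 s)).to_subtype
    have h1 : |⨆ x : Mix G (G.act1 s),
        (G.act2 s).inf' (G.h2 s)
          (fun a2 => ∑ a1 ∈ G.act1 s, x.1 a1 * dpVal G u L (G.tr s a1 a2))| ≤ L * M := by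
      rw [abs_le]
      constructor
      · obtain ⟨x⟩ := hs
        refine le_trans ?_ (le_ciSup ⟨L * M, ?_⟩ x)
        · exact neg_le_of_abs_le (hbound x)
        · rintro y ⟨x', rfl⟩; exact le_of_abs_le (hbound x')
      · exact ciSup_le fun x => le_of_abs_le (hbound x)
    calc |dpVal G u (L+1) s| ≤ |u s| + _ := abs_add_le _ _
      _ ≤ M + L * M := add_le_add (hM s) h1
      _ = ((L+1 : ℕ) : ℝ) * M := by push_cast; ring

end GameAux
end
noncomputable section
namespace GameAux
open Classical

variable {G : ConcGame}

lemma sum_sum_weights {F1 F2 : Finset G.A} {x y : G.A → ℝ} (hx : ∑ a ∈ F1, x a = 1)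
    (hy : ∑ a ∈ F2, y a = 1) (C : ℝ) :
    ∑ a1 ∈ F1, ∑ a2 ∈ F2, x a1 * y a2 * C = C := by
  calc ∑ a1 ∈ F1, ∑ a2 ∈ F2, x a1 * y a2 * C
      = ∑ a1 ∈ F1, x a1 * ∑ a2 ∈ F2, y a2 * C := by
        refine Finset.sum_congr rfl fun a1 _ => ?_
        rw [Finset.mul_sum]
        exact Finset.sum_congr rfl fun a2 _ => by ring
    _ = ∑ a1 ∈ F1, x a1 * C := by
        refine Finset.sum_congr rfl fun a1 _ => ?_
        rw [← Finset.sum_mul, hy, one_mul]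
    _ = C := by rw [← Finset.sum_mul, hx, one_mul]

lemma sum_swap_weights {F1 F2 : Finset G.A} (x y : G.A → ℝ) (D : G.A → G.A → ℝ) :
    ∑ a1 ∈ F1, ∑ a2 ∈ F2, x a1 * y a2 * D a1 a2
      = ∑ a2 ∈ F2, y a2 * ∑ a1 ∈ F1, x a1 * D a1 a2 := by
  rw [Finset.sum_comm]
  refine Finset.sum_congr rfl fun a2 _ => ?_
  rw [Finset.mul_sum]
  exact Finset.sum_congr rfl fun a1 _ => by ring

lemma expVal_bound {u : G.S → ℝ} {σ1 σ2 : Hist G → G.S → G.A → ℝ} {M : ℝ}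
    (hσ1 : σ1 ∈ Strat G G.act1) (hσ2 : σ2 ∈ Strat G G.act2)
    (hM : ∀ s, |u s| ≤ M) : ∀ L s h, |expVal G u σ1 σ2 L s h| ≤ L * M := by
  intro L
  induction L with
  | zero => intro s h; simp [expVal]
  | succ L ih =>
    intro s h
    have key : |∑ a1 ∈ G.act1 s, ∑ a2 ∈ G.act2 s,
        σ1 h s a1 * σ2 h s a2 * expVal G u σ1 σ2 L (G.tr s a1 a2) (h ++ [(s,a1,a2)])|
        ≤ L * M := by
      calc |∑ a1 ∈ G.act1 s, ∑ a2 ∈ G.act2 s,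
          σ1 h s a1 * σ2 h s a2 * expVal G u σ1 σ2 L (G.tr s a1 a2) (h ++ [(s,a1,a2)])|
          ≤ ∑ a1 ∈ G.act1 s, ∑ a2 ∈ G.act2 s,
            |σ1 h s a1 * σ2 h s a2 * expVal G u σ1 σ2 L (G.tr s a1 a2) (h ++ [(s,a1,a2)])| := by
            refine le_trans (Finset.abs_sum_le_sum_abs _ _) ?_
            exact Finset.sum_le_sum fun a1 _ => Finset.abs_sum_le_sum_abs _ _
        _ ≤ ∑ a1 ∈ G.act1 s, ∑ a2 ∈ G.act2 s, σ1 h s a1 * σ2 h s a2 * (L * M) := by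
            refine Finset.sum_le_sum fun a1 _ => Finset.sum_le_sum fun a2 _ => ?_
            rw [abs_mul, abs_mul, abs_of_nonneg ((hσ1 h s).1 a1),
              abs_of_nonneg ((hσ2 h s).1 a2)]
            refine mul_le_mul_of_nonneg_left (ih _ _) ?_
            exact mul_nonneg ((hσ1 h s).1 a1) ((hσ2 h s).1 a2)
        _ = L * M := sum_sum_weights (hσ1 h s).2.1 (hσ2 h s).2.1 _
    calc |expVal G u σ1 σ2 (L+1) s h| ≤ |u s| + _ := abs_add_le _ _
      _ ≤ M + L * M := add_le_add (hM s) key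
      _ = ((L+1 : ℕ) : ℝ) * M := by push_cast; ring

def delta (G : ConcGame) (b : G.A) : G.A → ℝ := fun a => if a = b then 1 else 0

lemma delta_mem {F : Finset G.A} {b : G.A} (hb : b ∈ F) : delta G b ∈ Mix G F := by
  refine ⟨fun a => ?_, ?_, fun a ha => ?_⟩
  · unfold delta; split <;> norm_num
  · unfold delta
    rw [Finset.sum_ite_eq' F b (fun _ => (1:ℝ)), if_pos hb]
  · unfold delta
    rw [if_neg]; rintro rfl; exact ha hb

lemma bddAbove_dpstage (u : G.S → ℝ) (L : ℕ) (s : G.S) :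
    BddAbove (Set.range fun x : Mix G (G.act1 s) =>
      (G.act2 s).inf' (G.h2 s)
        (fun a2 => ∑ a1 ∈ G.act1 s, x.1 a1 * dpVal G u L (G.tr s a1 a2))) := by
  have hS : (Finset.univ : Finset G.S).Nonempty := ⟨G.s0, Finset.mem_univ _⟩
  set M := Finset.univ.sup' hS (fun t => |u t|) with hMdef
  have hM : ∀ t, |u t| ≤ M := fun t => Finset.le_sup' (fun t => |u t|) (Finset.mem_univ t)
  refine ⟨L * M, ?_⟩
  rintro y ⟨x, rfl⟩
  obtain ⟨b2, hb2⟩ := G.h2 s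
  exact le_trans (Finset.inf'_le _ hb2)
    (mixSum_le G x.2 fun a1 _ => le_of_abs_le (dpVal_bound hM L _))

lemma exists_greedy (u : G.S → ℝ) {σ1 : Hist G → G.S → G.A → ℝ}
    (hσ1 : σ1 ∈ Strat G G.act1) (L : ℕ) :
    ∃ σ2 ∈ Strat G G.act2, ∀ K s (h : Hist G), K + h.length = L →
      expVal G u σ1 σ2 K s h ≤ dpVal G u K s := by
  have hex : ∀ (h : Hist G) (s : G.S), ∃ b ∈ G.act2 s, ∀ a2 ∈ G.act2 s,
      (∑ a1 ∈ G.act1 s, σ1 h s a1 * dpVal G u (L - 1 - h.length) (G.tr s a1 b))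
        ≤ ∑ a1 ∈ G.act1 s, σ1 h s a1 * dpVal G u (L - 1 - h.length) (G.tr s a1 a2) :=
    fun h s => Finset.exists_min_image (G.act2 s) _ (G.h2 s)
  choose bstar hbmem hbmin using hex
  refine ⟨fun h s => delta G (bstar h s), fun h s => delta_mem (hbmem h s), ?_⟩
  intro K
  induction K with
  | zero => intro s h _; simp [expVal, dpVal]
  | succ K ih =>
    intro s h hlen
    have hK : L - 1 - h.length = K := by omega
    have hcollapse : ∀ a1, ∑ a2 ∈ G.act2 s,
        σ1 h s a1 * delta G (bstar h s) a2 *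
          expVal G u σ1 (fun h s => delta G (bstar h s)) K (G.tr s a1 a2) (h ++ [(s,a1,a2)])
        = σ1 h s a1 *
          expVal G u σ1 (fun h s => delta G (bstar h s)) K (G.tr s a1 (bstar h s))
            (h ++ [(s,a1,bstar h s)]) := by
      intro a1
      have : ∀ a2, σ1 h s a1 * delta G (bstar h s) a2 *
          expVal G u σ1 (fun h s => delta G (bstar h s)) K (G.tr s a1 a2) (h ++ [(s,a1,a2)])
          = if a2 = bstar h s then σ1 h s a1 *
              expVal G u σ1 (fun h s => delta G (bstar h s)) K (G.tr s a1 a2)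
                (h ++ [(s,a1,a2)]) else 0 := by
        intro a2; unfold delta; split <;> ring
      rw [Finset.sum_congr rfl fun a2 _ => this a2,
        Finset.sum_ite_eq' (G.act2 s) (bstar h s), if_pos (hbmem h s)]
    calc expVal G u σ1 (fun h s => delta G (bstar h s)) (K+1) s h
        = u s + ∑ a1 ∈ G.act1 s, σ1 h s a1 *
            expVal G u σ1 (fun h s => delta G (bstar h s)) K (G.tr s a1 (bstar h s))
              (h ++ [(s,a1,bstar h s)]) := by
          show u s + _ = _
          rw [Finset.sum_congr rfl fun a1 _ => hcollapse a1]
      _ ≤ u s + ∑ a1 ∈ G.act1 s, σ1 h s a1 * dpVal G u K (G.tr s a1 (bstar h s)) := by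
          refine add_le_add_right (Finset.sum_le_sum fun a1 _ => ?_) _
          refine mul_le_mul_of_nonneg_left ?_ ((hσ1 h s).1 a1)
          exact ih _ _ (by simp; omega)
      _ ≤ u s + (G.act2 s).inf' (G.h2 s)
            (fun a2 => ∑ a1 ∈ G.act1 s, σ1 h s a1 * dpVal G u K (G.tr s a1 a2)) := by
          refine add_le_add_right (Finset.le_inf' _ _ fun a2 ha2 => ?_) _
          have := hbmin h s a2 ha2
          rw [hK] at this
          exact this
      _ ≤ u s + ⨆ x : Mix G (G.act1 s), (G.act2 s).inf' (G.h2 s)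
            (fun a2 => ∑ a1 ∈ G.act1 s, x.1 a1 * dpVal G u K (G.tr s a1 a2)) := by
          exact add_le_add_right (le_ciSup (bddAbove_dpstage u K s) ⟨σ1 h s, hσ1 h s⟩) _
      _ = dpVal G u (K+1) s := rfl

lemma exists_eps_opt (u : G.S → ℝ) (L : ℕ) {ε : ℝ} (hε : 0 < ε) :
    ∃ σ1 ∈ Strat G G.act1, ∀ σ2 ∈ Strat G G.act2, ∀ K s (h : Hist G),
      K + h.length = L → dpVal G u K s - K * ε ≤ expVal G u σ1 σ2 K s h := by
  have hx : ∀ (K : ℕ) (s : G.S), ∃ x ∈ Mix G (G.act1 s),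
      (⨆ x' : Mix G (G.act1 s), (G.act2 s).inf' (G.h2 s)
        (fun a2 => ∑ a1 ∈ G.act1 s, x'.1 a1 * dpVal G u K (G.tr s a1 a2))) - ε
        ≤ (G.act2 s).inf' (G.h2 s)
          (fun a2 => ∑ a1 ∈ G.act1 s, x a1 * dpVal G u K (G.tr s a1 a2)) := by
    intro K s
    have hne : Nonempty (Mix G (G.act1 s)) := (mix_nonempty G (G.h1 s)).to_subtype
    obtain ⟨x, hx⟩ := exists_lt_of_lt_ciSup (sub_lt_self (α := ℝ)
      (⨆ x' : Mix G (G.act1 s), (G.act2 s).inf' (G.h2 s)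
        (fun a2 => ∑ a1 ∈ G.act1 s, x'.1 a1 * dpVal G u K (G.tr s a1 a2))) hε)
    exact ⟨x.1, x.2, le_of_lt hx⟩
  choose xe hxmem hxopt using hx
  refine ⟨fun h s => xe (L - 1 - h.length) s, fun h s => hxmem _ s, ?_⟩
  intro σ2 hσ2 K
  induction K with
  | zero => intro s h _; simp [dpVal, expVal]
  | succ K ih =>
    intro s h hlen
    have hK : L - 1 - h.length = K := by omega
    set σ1 : Hist G → G.S → G.A → ℝ := fun h s => xe (L - 1 - h.length) s with hσ1def
    have hx1 : σ1 h s = xe K s := by simp only [hσ1def]; rw [hK]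
    have step1 : ∑ a1 ∈ G.act1 s, ∑ a2 ∈ G.act2 s,
        σ1 h s a1 * σ2 h s a2 * (dpVal G u K (G.tr s a1 a2) - K * ε)
        ≤ ∑ a1 ∈ G.act1 s, ∑ a2 ∈ G.act2 s, σ1 h s a1 * σ2 h s a2 *
          expVal G u σ1 σ2 K (G.tr s a1 a2) (h ++ [(s,a1,a2)]) := by
      refine Finset.sum_le_sum fun a1 _ => Finset.sum_le_sum fun a2 _ => ?_
      refine mul_le_mul_of_nonneg_left ?_
        (mul_nonneg ((hxmem _ s).1 a1) ((hσ2 h s).1 a2))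
      exact ih _ _ (by simp; omega)
    have hsplit : ∑ a1 ∈ G.act1 s, ∑ a2 ∈ G.act2 s,
        σ1 h s a1 * σ2 h s a2 * (dpVal G u K (G.tr s a1 a2) - K * ε)
        = (∑ a1 ∈ G.act1 s, ∑ a2 ∈ G.act2 s,
            σ1 h s a1 * σ2 h s a2 * dpVal G u K (G.tr s a1 a2)) - K * ε := by
      have := sum_sum_weights (G := G) (F1 := G.act1 s) (F2 := G.act2 s)
        (hx1 ▸ (hxmem K s).2.1) (hσ2 h s).2.1 ((K : ℝ) * ε)
      calc ∑ a1 ∈ G.act1 s, ∑ a2 ∈ G.act2 s,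
          σ1 h s a1 * σ2 h s a2 * (dpVal G u K (G.tr s a1 a2) - K * ε)
          = (∑ a1 ∈ G.act1 s, ∑ a2 ∈ G.act2 s,
              σ1 h s a1 * σ2 h s a2 * dpVal G u K (G.tr s a1 a2))
            - ∑ a1 ∈ G.act1 s, ∑ a2 ∈ G.act2 s, σ1 h s a1 * σ2 h s a2 * (K * ε) := by
            rw [← Finset.sum_sub_distrib]
            refine Finset.sum_congr rfl fun a1 _ => ?_
            rw [← Finset.sum_sub_distrib]
            exact Finset.sum_congr rfl fun a2 _ => by ring
        _ = _ := by rw [this]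
    have step2 : (G.act2 s).inf' (G.h2 s)
          (fun a2 => ∑ a1 ∈ G.act1 s, xe K s a1 * dpVal G u K (G.tr s a1 a2))
        ≤ ∑ a1 ∈ G.act1 s, ∑ a2 ∈ G.act2 s,
            σ1 h s a1 * σ2 h s a2 * dpVal G u K (G.tr s a1 a2) := by
      rw [sum_swap_weights]
      refine le_mixSum G (hσ2 h s) fun a2 ha2 => ?_
      rw [hx1]
      exact Finset.inf'_le _ ha2
    have hsup := hxopt K s
    have : dpVal G u (K+1) s - (K+1) * ε ≤ u s + (∑ a1 ∈ G.act1 s, ∑ a2 ∈ G.act2 s,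
        σ1 h s a1 * σ2 h s a2 * (dpVal G u K (G.tr s a1 a2) - K * ε)) := by
      rw [hsplit]
      show dpVal G u (K+1) s - ((K:ℝ)+1) * ε ≤ _
      have hdp : dpVal G u (K+1) s = u s + ⨆ x : Mix G (G.act1 s), (G.act2 s).inf' (G.h2 s)
        (fun a2 => ∑ a1 ∈ G.act1 s, x.1 a1 * dpVal G u K (G.tr s a1 a2)) := rfl
      rw [hdp]
      have := le_trans hsup step2
      linarith
    calc dpVal G u (K+1) s - ((K+1 : ℕ) : ℝ) * ε
        ≤ u s + (∑ a1 ∈ G.act1 s, ∑ a2 ∈ G.act2 s,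
            σ1 h s a1 * σ2 h s a2 * (dpVal G u K (G.tr s a1 a2) - K * ε)) := by
          refine le_trans (le_of_eq ?_) this
          push_cast; ring_nf
      _ ≤ u s + (∑ a1 ∈ G.act1 s, ∑ a2 ∈ G.act2 s, σ1 h s a1 * σ2 h s a2 *
            expVal G u σ1 σ2 K (G.tr s a1 a2) (h ++ [(s,a1,a2)])) := by
          exact add_le_add_right step1 _
      _ = expVal G u σ1 σ2 (K+1) s h := rfl

end GameAux
end
noncomputable section
namespace GameAux
open Classical

variable {G : ConcGame}

theorem valFrom_eq_dpVal (u : G.S → ℝ) (L : ℕ) (s : G.S) :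
    valFrom G u L s = dpVal G u L s := by
  have hS1 : Nonempty (Strat G G.act1) := (strat_nonempty G _ G.h1).to_subtype
  have hS2 : Nonempty (Strat G G.act2) := (strat_nonempty G _ G.h2).to_subtype
  have hSne : (Finset.univ : Finset G.S).Nonempty := ⟨G.s0, Finset.mem_univ _⟩
  set M := Finset.univ.sup' hSne (fun t => |u t|) with hMdef
  have hM : ∀ t, |u t| ≤ M := fun t => Finset.le_sup' (fun t => |u t|) (Finset.mem_univ t)
  have hbb : ∀ σ1 : Strat G G.act1,
      BddBelow (Set.range fun σ2 : Strat G G.act2 => expVal G u σ1.1 σ2.1 L s []) := by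
    intro σ1
    refine ⟨-(L * M), ?_⟩
    rintro y ⟨σ2, rfl⟩
    exact neg_le_of_abs_le (expVal_bound σ1.2 σ2.2 hM L s [])
  have hba : BddAbove (Set.range fun σ1 : Strat G G.act1 =>
      ⨅ σ2 : Strat G G.act2, expVal G u σ1.1 σ2.1 L s []) := by
    refine ⟨L * M, ?_⟩
    rintro y ⟨σ1, rfl⟩
    obtain ⟨σ2⟩ := hS2
    exact le_trans (ciInf_le (hbb σ1) σ2) (le_of_abs_le (expVal_bound σ1.2 σ2.2 hM L s []))
  apply le_antisymm
  · refine ciSup_le fun σ1 => ?_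
    obtain ⟨σ2, hσ2, hg⟩ := exists_greedy u σ1.2 L
    exact le_trans (ciInf_le (hbb σ1) ⟨σ2, hσ2⟩) (hg L s [] (by simp))
  · refine le_of_forall_pos_le_add fun ε hε => ?_
    have hε' : (0:ℝ) < ε / (L + 1) := by positivity
    obtain ⟨σ1, hσ1, hopt⟩ := exists_eps_opt u L hε'
    have h1 : dpVal G u L s - L * (ε / (L + 1))
        ≤ ⨅ σ2 : Strat G G.act2, expVal G u σ1 σ2.1 L s [] := by
      refine le_ciInf fun σ2 => hopt σ2.1 σ2.2 L s [] (by simp)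
    have h2 : (⨅ σ2 : Strat G G.act2, expVal G u σ1 σ2.1 L s []) ≤ valFrom G u L s :=
      le_ciSup hba ⟨σ1, hσ1⟩
    have h3 : (L:ℝ) * (ε / (L + 1)) ≤ ε := by
      rw [mul_div_assoc']
      rw [div_le_iff₀ (by positivity)]
      nlinarith [hε.le]
    linarith

theorem gval_eq_dpVal (G : ConcGame) (u : G.S → ℝ) (L : ℕ) :
    gval G u L = dpVal G u L G.s0 := valFrom_eq_dpVal u L G.s0

/-- Relational simulation lemma for the DP value. -/
theorem dpVal_le_of_sim {A B : ConcGame} {uA : A.S → ℝ} {uB : B.S → ℝ}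
    (R : A.S → B.S → Prop)
    (hu : ∀ s t, R s t → uA s ≤ uB t)
    (hstep : ∀ s t, R s t → ∃ ψ : A.A → B.A,
      (∀ a ∈ A.act1 s, ψ a ∈ B.act1 t) ∧
      ∀ b2 ∈ B.act2 t, ∃ a2 ∈ A.act2 s, ∀ a1 ∈ A.act1 s,
        R (A.tr s a1 a2) (B.tr t (ψ a1) b2)) :
    ∀ L s t, R s t → dpVal A uA L s ≤ dpVal B uB L t := by
  intro L
  induction L with
  | zero => intro s t _; simp [dpVal]
  | succ L ih =>
    intro s t hR
    obtain ⟨ψ, hψ, hact2⟩ := hstep s t hR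
    refine add_le_add (hu s t hR) ?_
    have hne : Nonempty (Mix A (A.act1 s)) := (mix_nonempty A (A.h1 s)).to_subtype
    refine ciSup_le fun x => ?_
    -- pushforward of x along ψ
    set y : B.A → ℝ := fun b => ∑ a ∈ (A.act1 s).filter (fun a => ψ a = b), x.1 a with hydef
    have hfib : ∀ (c : B.A → ℝ), ∑ b ∈ B.act1 t, y b * c b
        = ∑ a ∈ A.act1 s, x.1 a * c (ψ a) := by
      intro c
      calc ∑ b ∈ B.act1 t, y b * c b
          = ∑ b ∈ B.act1 t, ∑ a ∈ (A.act1 s).filter (fun a => ψ a = b), x.1 a * c (ψ a) := by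
            refine Finset.sum_congr rfl fun b _ => ?_
            rw [hydef, Finset.sum_mul]
            refine Finset.sum_congr rfl fun a ha => ?_
            rw [(Finset.mem_filter.mp ha).2]
        _ = ∑ a ∈ A.act1 s, x.1 a * c (ψ a) :=
            Finset.sum_fiberwise_of_maps_to hψ _
    have hy : y ∈ Mix B (B.act1 t) := by
      refine ⟨fun b => Finset.sum_nonneg fun a _ => x.2.1 a, ?_, ?_⟩
      · have := hfib (fun _ => 1)
        simpa [x.2.2.1] using this
      · intro b hb
        rw [hydef]
        refine Finset.sum_eq_zero fun a ha => ?_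
        obtain ⟨ha1, ha2⟩ := Finset.mem_filter.mp ha
        exact absurd (ha2 ▸ hψ a ha1) hb
    refine le_trans ?_ (le_ciSup (bddAbove_dpstage uB L t) ⟨y, hy⟩)
    refine Finset.le_inf' _ _ fun b2 hb2 => ?_
    obtain ⟨a2, ha2, hRnext⟩ := hact2 b2 hb2
    calc (A.act2 s).inf' (A.h2 s)
          (fun a2 => ∑ a1 ∈ A.act1 s, x.1 a1 * dpVal A uA L (A.tr s a1 a2))
        ≤ ∑ a1 ∈ A.act1 s, x.1 a1 * dpVal A uA L (A.tr s a1 a2) := Finset.inf'_le _ ha2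
      _ ≤ ∑ a1 ∈ A.act1 s, x.1 a1 * dpVal B uB L (B.tr t (ψ a1) b2) := by
          refine Finset.sum_le_sum fun a1 ha1 => ?_
          exact mul_le_mul_of_nonneg_left (ih _ _ (hRnext a1 ha1)) (x.2.1 a1)
      _ = ∑ b1 ∈ B.act1 t, y b1 * dpVal B uB L (B.tr t b1 b2) :=
          (hfib fun b1 => dpVal B uB L (B.tr t b1 b2)).symm

end GameAux
end
noncomputable section
namespace GameAux
open Classical

variable {G : ConcGame} {r1 r2 : Setoid G.S}

/-- Projection of finer classes to coarser classes. -/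
def qmap (href : ∀ s s', r2.r s s' → r1.r s s') : Quotient r2 → Quotient r1 :=
  Quotient.lift (fun s => Quotient.mk r1 s) (fun a b h => Quotient.sound (href a b h))

lemma qmap_mk (href : ∀ s s', r2.r s s' → r1.r s s') (s : G.S) :
    qmap href (Quotient.mk r2 s) = Quotient.mk r1 s := rfl

lemma mk_out {r : Setoid G.S} (q : Quotient r) : Quotient.mk r q.out = q :=
  Quotient.out_eq q

lemma qmap_out_rel (href : ∀ s s', r2.r s s' → r1.r s s') (q : Quotient r2) :
    r1.r ((qmap href q).out) q.out := by
  apply Quotient.exact (s := r1)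
  show Quotient.mk r1 (qmap href q).out = Quotient.mk r1 q.out
  rw [mk_out]
  conv_lhs => rw [← mk_out (r := r2) q]
  rfl

lemma act_out_eq (hc1 : Compatible G r1) (href : ∀ s s', r2.r s s' → r1.r s s')
    (q : Quotient r2) :
    G.act1 ((qmap href q).out) = G.act1 q.out ∧ G.act2 ((qmap href q).out) = G.act2 q.out :=
  hc1 _ _ (qmap_out_rel href q)

lemma mem_succClasses {r : Setoid G.S} {π' π : Quotient r} {a1 a2 : G.A} :
    π' ∈ succClasses G r π a1 a2 ↔
      ∃ s, Quotient.mk r s = π ∧ Quotient.mk r (G.tr s a1 a2) = π' := by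
  unfold succClasses
  simp [Finset.mem_image, Finset.mem_filter]

lemma qmap_succ (href : ∀ s s', r2.r s s' → r1.r s s') {π' π : Quotient r2} {a1 a2 : G.A}
    (h : π' ∈ succClasses G r2 π a1 a2) :
    qmap href π' ∈ succClasses G r1 (qmap href π) a1 a2 := by
  obtain ⟨s, hs, hs'⟩ := mem_succClasses.mp h
  exact mem_succClasses.mpr ⟨s, by rw [← hs]; rfl, by rw [← hs']; rfl⟩

lemma classOf_subset (href : ∀ s s', r2.r s s' → r1.r s s') (q : Quotient r2) :
    classOf G r2 q ⊆ classOf G r1 (qmap href q) := by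
  intro s hs
  show Quotient.mk r1 s = qmap href q
  rw [← hs]
  rfl

lemma classOf_nonempty {r : Setoid G.S} (q : Quotient r) : (classOf G r q).Nonempty :=
  ⟨q.out, mk_out q⟩

-- projection helper lemmas for the abstract games
section abslemmas
variable (r : Setoid G.S)

instance absDecEqQuot : DecidableEq (Quotient r) := Classical.decEq _

lemma lower_act1_inl (q : Quotient r) :
    (lowerAbs G r).act1 (Sum.inl q) = (G.act1 q.out).image Sum.inl := by ext x; simp [lowerAbs, upperAbs]
lemma lower_act1_inr (d : Quotient r × G.A × G.A) :
    (lowerAbs G r).act1 (Sum.inr d) = {Sum.inr d.1} := rfl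
lemma lower_act2_inl (q : Quotient r) :
    (lowerAbs G r).act2 (Sum.inl q) = (G.act2 q.out).image Sum.inl := by ext x; simp [lowerAbs, upperAbs]
lemma lower_act2_inr (d : Quotient r × G.A × G.A) :
    (lowerAbs G r).act2 (Sum.inr d) = (succClasses G r d.1 d.2.1 d.2.2).image Sum.inr := by ext x; simp [lowerAbs, upperAbs]
lemma upper_act1_inl (q : Quotient r) :
    (upperAbs G r).act1 (Sum.inl q) = (G.act1 q.out).image Sum.inl := by ext x; simp [lowerAbs, upperAbs]
lemma upper_act1_inr (d : Quotient r × G.A × G.A) :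
    (upperAbs G r).act1 (Sum.inr d) = (succClasses G r d.1 d.2.1 d.2.2).image Sum.inr := by ext x; simp [lowerAbs, upperAbs]
lemma upper_act2_inl (q : Quotient r) :
    (upperAbs G r).act2 (Sum.inl q) = (G.act2 q.out).image Sum.inl := by ext x; simp [lowerAbs, upperAbs]
lemma upper_act2_inr (d : Quotient r × G.A × G.A) :
    (upperAbs G r).act2 (Sum.inr d) = {Sum.inr d.1} := rfl

lemma lower_tr_inl (q : Quotient r) (b1 b2 : G.A) :
    (lowerAbs G r).tr (Sum.inl q) (Sum.inl b1) (Sum.inl b2) = Sum.inr (q, b1, b2) := rfl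
lemma lower_tr_inr (d : Quotient r × G.A × G.A) (c : Quotient r) (π' : Quotient r) :
    (lowerAbs G r).tr (Sum.inr d) (Sum.inr c) (Sum.inr π') = Sum.inl π' := rfl
lemma upper_tr_inl (q : Quotient r) (b1 b2 : G.A) :
    (upperAbs G r).tr (Sum.inl q) (Sum.inl b1) (Sum.inl b2) = Sum.inr (q, b1, b2) := rfl
lemma upper_tr_inr (d : Quotient r × G.A × G.A) (π' : Quotient r) (c : Quotient r) :
    (upperAbs G r).tr (Sum.inr d) (Sum.inr π') (Sum.inr c) = Sum.inl π' := rfl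

lemma lowerU_inl (u : G.S → ℝ) (q : Quotient r) :
    lowerU G r u (Sum.inl q) = sInf (u '' classOf G r q) := rfl
lemma upperU_inl (u : G.S → ℝ) (q : Quotient r) :
    upperU G r u (Sum.inl q) = sSup (u '' classOf G r q) := rfl

end abslemmas

end GameAux
end
noncomputable section
namespace GameAux
open Classical

variable {G : ConcGame} {r1 r2 : Setoid G.S}

def fmap (href : ∀ s s', r2.r s s' → r1.r s s') : AbsS G r2 → AbsS G r1 :=
  Sum.map (qmap href) (fun d => (qmap href d.1, d.2.1, d.2.2))

lemma fmap_inl (href : ∀ s s', r2.r s s' → r1.r s s') (q : Quotient r2) :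
    fmap href (Sum.inl q) = Sum.inl (qmap href q) := rfl
lemma fmap_inr (href : ∀ s s', r2.r s s' → r1.r s s') (π : Quotient r2) (a1 a2 : G.A) :
    fmap href (Sum.inr (π, a1, a2)) = Sum.inr (qmap href π, a1, a2) := rfl

lemma sim_lower (u : G.S → ℝ) (href : ∀ s s', r2.r s s' → r1.r s s')
    (hc1 : Compatible G r1) :
    ∀ L s t, s = fmap href t →
      dpVal (lowerAbs G r1) (lowerU G r1 u) L s ≤ dpVal (lowerAbs G r2) (lowerU G r2 u) L t := by
  refine dpVal_le_of_sim (A := lowerAbs G r1) (B := lowerAbs G r2)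
    (uA := lowerU G r1 u) (uB := lowerU G r2 u) (fun s t => s = fmap href t) ?_ ?_
  · rintro s t rfl
    rcases t with q | ⟨π, a1, a2⟩
    · rw [fmap_inl, lowerU_inl, lowerU_inl]
      exact csInf_le_csInf ((Set.toFinite _).bddBelow)
        ((classOf_nonempty q).image u) (Set.image_mono (classOf_subset href q))
    · rw [fmap_inr]; exact le_refl 0
  · rintro s t rfl
    rcases t with q | ⟨π, a1, a2⟩
    · refine ⟨Sum.map id (fun _ => q), ?_, ?_⟩
      · intro a ha
        rw [fmap_inl, lower_act1_inl] at ha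
        replace ha := Finset.mem_image.mp ha
        obtain ⟨b, hb, rfl⟩ := ha
        rw [(act_out_eq hc1 href q).1] at hb
        rw [lower_act1_inl]
        refine Finset.mem_image.mpr ?_
        exact ⟨b, hb, rfl⟩
      · intro b2 hb2
        rw [lower_act2_inl] at hb2
        replace hb2 := Finset.mem_image.mp hb2
        obtain ⟨a, ha, rfl⟩ := hb2
        refine ⟨Sum.inl a, ?_, ?_⟩
        · rw [fmap_inl, lower_act2_inl]
          refine Finset.mem_image.mpr ?_
          refine ⟨a, ?_, rfl⟩
          rw [(act_out_eq hc1 href q).2]; exact ha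
        · intro c1 hcmem
          rw [fmap_inl, lower_act1_inl] at hcmem
          replace hcmem := Finset.mem_image.mp hcmem
          obtain ⟨b, hb, rfl⟩ := hcmem
          rfl
    · refine ⟨fun _ => Sum.inr π, ?_, ?_⟩
      · intro a _
        rw [lower_act1_inr]
        exact Finset.mem_singleton_self _
      · intro b2 hb2
        rw [lower_act2_inr] at hb2
        replace hb2 := Finset.mem_image.mp hb2
        obtain ⟨π', hπ', rfl⟩ := hb2
        refine ⟨Sum.inr (qmap href π'), ?_, ?_⟩
        · rw [fmap_inr, lower_act2_inr]
          refine Finset.mem_image.mpr ?_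
          exact ⟨qmap href π', qmap_succ href hπ', rfl⟩
        · intro c1 hcmem
          rw [fmap_inr, lower_act1_inr] at hcmem
          replace hcmem := Finset.mem_singleton.mp hcmem
          rw [hcmem]
          rfl

lemma sim_mid (u : G.S → ℝ) :
    ∀ L s t, s = t →
      dpVal (lowerAbs G r2) (lowerU G r2 u) L s ≤ dpVal (upperAbs G r2) (upperU G r2 u) L t := by
  refine dpVal_le_of_sim (A := lowerAbs G r2) (B := upperAbs G r2)
    (uA := lowerU G r2 u) (uB := upperU G r2 u) (fun s t => s = t) ?_ ?_
  · rintro s t rfl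
    rcases s with q | ⟨π, a1, a2⟩
    · rw [lowerU_inl, upperU_inl]
      exact csInf_le_csSup ((classOf_nonempty q).image u) ((Set.toFinite _).bddBelow)
        ((Set.toFinite _).bddAbove)
    · exact le_refl 0
  · rintro s t rfl
    rcases s with q | ⟨π, a1, a2⟩
    · refine ⟨id, ?_, ?_⟩
      · intro a ha
        rw [lower_act1_inl] at ha
        rw [upper_act1_inl]
        exact ha
      · intro b2 hb2
        rw [upper_act2_inl] at hb2
        replace hb2 := Finset.mem_image.mp hb2
        obtain ⟨a, ha, rfl⟩ := hb2
        refine ⟨Sum.inl a, ?_, ?_⟩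
        · rw [lower_act2_inl]
          refine Finset.mem_image.mpr ?_
          exact ⟨a, ha, rfl⟩
        · intro c1 hcmem
          rw [lower_act1_inl] at hcmem
          replace hcmem := Finset.mem_image.mp hcmem
          obtain ⟨b, hb, rfl⟩ := hcmem
          rfl
    · obtain ⟨π₀, hπ₀⟩ := succClasses_nonempty G r2 π a1 a2
      refine ⟨fun _ => Sum.inr π₀, ?_, ?_⟩
      · intro a _
        rw [upper_act1_inr]
        refine Finset.mem_image.mpr ?_
        exact ⟨π₀, hπ₀, rfl⟩
      · intro b2 hb2
        rw [upper_act2_inr] at hb2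
        replace hb2 := Finset.mem_singleton.mp hb2
        rw [hb2]
        refine ⟨Sum.inr π₀, ?_, ?_⟩
        · rw [lower_act2_inr]
          refine Finset.mem_image.mpr ?_
          exact ⟨π₀, hπ₀, rfl⟩
        · intro c1 hcmem
          rw [lower_act1_inr] at hcmem
          replace hcmem := Finset.mem_singleton.mp hcmem
          rw [hcmem]
          rfl

lemma sim_upper (u : G.S → ℝ) (href : ∀ s s', r2.r s s' → r1.r s s')
    (hc1 : Compatible G r1) :
    ∀ L s t, fmap href s = t →
      dpVal (upperAbs G r2) (upperU G r2 u) L s ≤ dpVal (upperAbs G r1) (upperU G r1 u) L t := by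
  refine dpVal_le_of_sim (A := upperAbs G r2) (B := upperAbs G r1)
    (uA := upperU G r2 u) (uB := upperU G r1 u) (fun s t => fmap href s = t) ?_ ?_
  · rintro s t rfl
    rcases s with q | ⟨π, a1, a2⟩
    · rw [fmap_inl, upperU_inl, upperU_inl]
      exact csSup_le_csSup ((Set.toFinite _).bddAbove)
        ((classOf_nonempty q).image u) (Set.image_mono (classOf_subset href q))
    · rw [fmap_inr]; exact le_refl 0
  · rintro s t rfl
    rcases s with q | ⟨π, a1, a2⟩
    · refine ⟨Sum.map id (qmap href), ?_, ?_⟩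
      · intro a ha
        rw [upper_act1_inl] at ha
        replace ha := Finset.mem_image.mp ha
        obtain ⟨b, hb, rfl⟩ := ha
        rw [fmap_inl, upper_act1_inl]
        refine Finset.mem_image.mpr ?_
        refine ⟨b, ?_, rfl⟩
        rw [(act_out_eq hc1 href q).1]; exact hb
      · intro b2 hb2
        rw [fmap_inl, upper_act2_inl] at hb2
        replace hb2 := Finset.mem_image.mp hb2
        obtain ⟨a, ha, rfl⟩ := hb2
        rw [(act_out_eq hc1 href q).2] at ha
        refine ⟨Sum.inl a, ?_, ?_⟩
        · rw [upper_act2_inl]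
          refine Finset.mem_image.mpr ?_
          exact ⟨a, ha, rfl⟩
        · intro c1 hcmem
          rw [upper_act1_inl] at hcmem
          replace hcmem := Finset.mem_image.mp hcmem
          obtain ⟨b, hb, rfl⟩ := hcmem
          rfl
    · refine ⟨Sum.map id (qmap href), ?_, ?_⟩
      · intro a ha
        rw [upper_act1_inr] at ha
        replace ha := Finset.mem_image.mp ha
        obtain ⟨π', hπ', rfl⟩ := ha
        rw [fmap_inr, upper_act1_inr]
        refine Finset.mem_image.mpr ?_
        exact ⟨qmap href π', qmap_succ href hπ', rfl⟩
      · intro b2 hb2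
        rw [fmap_inr, upper_act2_inr] at hb2
        replace hb2 := Finset.mem_singleton.mp hb2
        rw [hb2]
        refine ⟨Sum.inr π, ?_, ?_⟩
        · rw [upper_act2_inr]; exact Finset.mem_singleton_self _
        · intro c1 hcmem
          rw [upper_act1_inr] at hcmem
          replace hcmem := Finset.mem_image.mp hcmem
          obtain ⟨π', hπ', rfl⟩ := hcmem
          rfl

end GameAux
end
/-- Refinement property: if the partition induced by `r2` refines the one induced
by `r1` (i.e. `r2`-equivalence implies `r1`-equivalence), then the abstracted
values of the finer partition lie between those of the coarser one. -/
theorem abstraction_refinement (G : ConcGame) (u : G.S → ℝ)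
    (r1 r2 : Setoid G.S)
    (href : ∀ s s', r2.r s s' → r1.r s s')
    (hc1 : Compatible G r1) (hc2 : Compatible G r2) (L : ℕ) :
    gval (lowerAbs G r1) (lowerU G r1 u) (2 * L)
        ≤ gval (lowerAbs G r2) (lowerU G r2 u) (2 * L) ∧
    gval (lowerAbs G r2) (lowerU G r2 u) (2 * L)
        ≤ gval (upperAbs G r2) (upperU G r2 u) (2 * L) ∧
    gval (upperAbs G r2) (upperU G r2 u) (2 * L)
        ≤ gval (upperAbs G r1) (upperU G r1 u) (2 * L) := by
  rw [GameAux.gval_eq_dpVal (lowerAbs G r1) (lowerU G r1 u),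
    GameAux.gval_eq_dpVal (lowerAbs G r2) (lowerU G r2 u),
    GameAux.gval_eq_dpVal (upperAbs G r2) (upperU G r2 u),
    GameAux.gval_eq_dpVal (upperAbs G r1) (upperU G r1 u)]
  refine ⟨?_, ?_, ?_⟩
  · exact GameAux.sim_lower u href hc1 (2 * L) _ _ rfl
  · exact GameAux.sim_mid u (2 * L) _ _ rfl
  · exact GameAux.sim_upper u href hc1 (2 * L) _ _ rfl
end

section
/- Completeness in the limit of game abstraction: For any finite concurrent two-player zero-sum game (G, u), horizon L, and partition Π1 of its state space compatible with action sets, and for every ε ≥ 0, there exists a refinement Π2 ⊑ Π1 whose lower and upper abstractions (G2↓, u2↓), (G2↑, u2↑) satisfy υ_L(G2↑, u2↑) − υ_L(G2↓, u2↓) ≤ ε. In particular, for the unit partition Π* = {{s} : s ∈ S}, the lower and upper abstraction values coincide. -/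
open scoped BigOperators

/-- The unit partition: every state in its own singleton class. -/
def unitSetoid (G : ConcGame) : Setoid G.S := ⟨Eq, eq_equivalence⟩

section UnitAbs

open Classical

variable (G : ConcGame)

local notation "rU" => unitSetoid G

/-- The unique successor class of a dummy state, for the unit partition. -/
noncomputable def nxt (d : Quotient rU × G.A × G.A) : Quotient rU :=
  Quotient.mk rU (G.tr d.1.out d.2.1 d.2.2)

lemma succClasses_unit (d : Quotient rU × G.A × G.A) :
    succClasses G rU d.1 d.2.1 d.2.2 = {nxt G d} := by
  unfold succClasses nxt
  ext x
  simp only [Finset.mem_image, Finset.mem_filter, Finset.mem_univ, true_and,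
    Finset.mem_singleton]
  constructor
  · rintro ⟨s, hs, rfl⟩
    have : s = d.1.out := Quotient.exact (hs.trans d.1.out_eq.symm)
    rw [this]
  · rintro rfl; exact ⟨d.1.out, d.1.out_eq, rfl⟩

lemma actL1_inl (q : Quotient rU) :
    (lowerAbs G rU).act1 (Sum.inl q) = (G.act1 q.out).map ⟨Sum.inl, Sum.inl_injective⟩ := by
  simp only [lowerAbs, Finset.map_eq_image]; congr!

lemma actL2_inl (q : Quotient rU) :
    (lowerAbs G rU).act2 (Sum.inl q) = (G.act2 q.out).map ⟨Sum.inl, Sum.inl_injective⟩ := by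
  simp only [lowerAbs, Finset.map_eq_image]; congr!

lemma actU1_inl (q : Quotient rU) :
    (upperAbs G rU).act1 (Sum.inl q) = (G.act1 q.out).map ⟨Sum.inl, Sum.inl_injective⟩ := by
  simp only [upperAbs, Finset.map_eq_image]; congr!

lemma actU2_inl (q : Quotient rU) :
    (upperAbs G rU).act2 (Sum.inl q) = (G.act2 q.out).map ⟨Sum.inl, Sum.inl_injective⟩ := by
  simp only [upperAbs, Finset.map_eq_image]; congr!

lemma actL1_inr (d : Quotient rU × G.A × G.A) :
    (lowerAbs G rU).act1 (Sum.inr d) = {Sum.inr d.1} := rfl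

lemma actU2_inr (d : Quotient rU × G.A × G.A) :
    (upperAbs G rU).act2 (Sum.inr d) = {Sum.inr d.1} := rfl

lemma actL2_inr (d : Quotient rU × G.A × G.A) :
    (lowerAbs G rU).act2 (Sum.inr d) = {Sum.inr (nxt G d)} := by
  ext a; simp [lowerAbs, succClasses_unit G d]; exact Iff.rfl

lemma actU1_inr (d : Quotient rU × G.A × G.A) :
    (upperAbs G rU).act1 (Sum.inr d) = {Sum.inr (nxt G d)} := by
  ext a; simp [upperAbs, succClasses_unit G d]; exact Iff.rfl

lemma upperU_eq_lowerU (u : G.S → ℝ) : upperU G rU u = lowerU G rU u := by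
  funext s
  cases s with
  | inr d => rfl
  | inl q =>
    have hc : classOf G rU q = {q.out} := by
      ext s
      simp only [classOf, Set.mem_setOf_eq, Set.mem_singleton_iff]
      exact ⟨fun h => Quotient.exact (h.trans q.out_eq.symm), fun h => h ▸ q.out_eq⟩
    simp [upperU, lowerU, hc]

/-- Swap the action pair in every dummy-state entry of a history. -/
def histSwap : List (AbsS G rU × AbsA G rU × AbsA G rU) →
    List (AbsS G rU × AbsA G rU × AbsA G rU) :=
  List.map (fun e => match e with
    | (Sum.inl q, a, b) => (Sum.inl q, a, b)
    | (Sum.inr d, a, b) => (Sum.inr d, b, a))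

lemma histSwap_append (h h' : List (AbsS G rU × AbsA G rU × AbsA G rU)) :
    histSwap G (h ++ h') = histSwap G h ++ histSwap G h' :=
  List.map_append

lemma histSwap_swap (h : List (AbsS G rU × AbsA G rU × AbsA G rU)) :
    histSwap G (histSwap G h) = h := by
  induction h with
  | nil => rfl
  | cons e t ih =>
    obtain ⟨s, a, b⟩ := e
    cases s <;> simp [histSwap] at ih ⊢ <;> exact ih

lemma strat_one {H : ConcGame} {act : H.S → Finset H.A}
    {σ : Hist H → H.S → H.A → ℝ} (hσ : σ ∈ Strat H act)
    (h : Hist H) {s : H.S} {a : H.A} (hact : act s = {a}) : σ h s a = 1 := by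
  have := (hσ h s).2.1
  rwa [hact, Finset.sum_singleton] at this

/-- The key exchange lemma: under the unit partition, corresponding strategy
profiles in the lower and upper abstractions yield equal expected values. -/
lemma expVal_swap (w : AbsS G rU → ℝ)
    (σ1 σ2 τ1 τ2 : List (AbsS G rU × AbsA G rU × AbsA G rU) →
      AbsS G rU → AbsA G rU → ℝ)
    (hσ1 : σ1 ∈ Strat (lowerAbs G rU) (lowerAbs G rU).act1) (hσ2 : σ2 ∈ Strat (lowerAbs G rU) (lowerAbs G rU).act2)
    (hτ1 : τ1 ∈ Strat (upperAbs G rU) (upperAbs G rU).act1) (hτ2 : τ2 ∈ Strat (upperAbs G rU) (upperAbs G rU).act2)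
    (hA1 : ∀ h q a, τ1 (histSwap G h) (Sum.inl q) a = σ1 h (Sum.inl q) a)
    (hA2 : ∀ h q a, τ2 (histSwap G h) (Sum.inl q) a = σ2 h (Sum.inl q) a) :
    ∀ (L : ℕ) (s : AbsS G rU) (h : List (AbsS G rU × AbsA G rU × AbsA G rU)),
      expVal (upperAbs G rU) w τ1 τ2 L s (histSwap G h) = expVal (lowerAbs G rU) w σ1 σ2 L s h := by
  intro L
  induction L with
  | zero => intro s h; rfl
  | succ L ih =>
    intro s h
    cases s with
    | inl q =>
      erw [expVal.eq_2, expVal.eq_2, actU1_inl, actU2_inl]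
      erw [Finset.sum_map, Finset.sum_map]
      congr 1
      refine Finset.sum_congr rfl (fun b1 _ => ?_)
      erw [Finset.sum_map, Finset.sum_map]
      refine Finset.sum_congr rfl (fun b2 _ => ?_)
      erw [hA1, hA2]
      have hrec := ih (Sum.inr (q, b1, b2)) (h ++ [(Sum.inl q, Sum.inl b1, Sum.inl b2)])
      rw [histSwap_append] at hrec
      exact congrArg (fun z => σ1 h (Sum.inl q) (Sum.inl b1) *
        σ2 h (Sum.inl q) (Sum.inl b2) * z) hrec
    | inr d =>
      erw [expVal.eq_2, expVal.eq_2, actU1_inr, actU2_inr, actL1_inr, actL2_inr]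
      erw [Finset.sum_singleton, Finset.sum_singleton, Finset.sum_singleton,
        Finset.sum_singleton]
      erw [strat_one hσ1 h (actL1_inr G d), strat_one hσ2 h (actL2_inr G d),
        strat_one hτ1 _ (actU1_inr G d), strat_one hτ2 _ (actU2_inr G d)]
      have hrec := ih (Sum.inl (nxt G d)) (h ++ [(Sum.inr d, Sum.inr d.1, Sum.inr (nxt G d))])
      rw [histSwap_append] at hrec
      exact congrArg (fun z => w (Sum.inr d) + 1 * 1 * z) hrec

/-- Transport of a strategy: at dummy states, put all mass on the successor class. -/
noncomputable def toTop (σ : List (AbsS G rU × AbsA G rU × AbsA G rU) →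
    AbsS G rU → AbsA G rU → ℝ) :
    List (AbsS G rU × AbsA G rU × AbsA G rU) → AbsS G rU → AbsA G rU → ℝ :=
  fun h s a => match s with
  | Sum.inl q => σ (histSwap G h) (Sum.inl q) a
  | Sum.inr d => if a = Sum.inr (nxt G d) then 1 else 0

/-- Transport of a strategy: at dummy states, put all mass on the stay action. -/
noncomputable def toBot (σ : List (AbsS G rU × AbsA G rU × AbsA G rU) →
    AbsS G rU → AbsA G rU → ℝ) :
    List (AbsS G rU × AbsA G rU × AbsA G rU) → AbsS G rU → AbsA G rU → ℝ :=
  fun h s a => match s with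
  | Sum.inl q => σ (histSwap G h) (Sum.inl q) a
  | Sum.inr d => if a = Sum.inr d.1 then 1 else 0

lemma agree_toTop (σ) : ∀ h q a,
    toTop G σ (histSwap G h) (Sum.inl q) a = σ h (Sum.inl q) a := fun h q a => by
  show σ (histSwap G (histSwap G h)) (Sum.inl q) a = _
  rw [histSwap_swap]

lemma agree_toBot (σ) : ∀ h q a,
    toBot G σ (histSwap G h) (Sum.inl q) a = σ h (Sum.inl q) a := fun h q a => by
  show σ (histSwap G (histSwap G h)) (Sum.inl q) a = _
  rw [histSwap_swap]

lemma toTop_mem1 {σ} (hσ : σ ∈ Strat (lowerAbs G rU) (lowerAbs G rU).act1) :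
    toTop G σ ∈ Strat (upperAbs G rU) (upperAbs G rU).act1 := by
  intro h s
  cases s with
  | inl q =>
    obtain ⟨h1, h2, h3⟩ := hσ (histSwap G h) (Sum.inl q)
    refine ⟨fun a => h1 a, ?_, fun a ha => ?_⟩
    · rw [actU1_inl]; rw [actL1_inl] at h2; exact h2
    · exact h3 a (by rwa [actL1_inl, ← actU1_inl])
  | inr d =>
    refine ⟨fun a => ?_, ?_, fun a ha => ?_⟩
    · dsimp only [toTop]; split <;> norm_num
    · erw [actU1_inr, Finset.sum_singleton]; simp [toTop]
    · erw [actU1_inr, Finset.mem_singleton] at ha; simp [toTop, ha]; exact ha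

lemma toTop_mem2 {σ} (hσ : σ ∈ Strat (upperAbs G rU) (upperAbs G rU).act2) :
    toTop G σ ∈ Strat (lowerAbs G rU) (lowerAbs G rU).act2 := by
  intro h s
  cases s with
  | inl q =>
    obtain ⟨h1, h2, h3⟩ := hσ (histSwap G h) (Sum.inl q)
    refine ⟨fun a => h1 a, ?_, fun a ha => ?_⟩
    · rw [actL2_inl]; rw [actU2_inl] at h2; exact h2
    · exact h3 a (by rwa [actU2_inl, ← actL2_inl])
  | inr d =>
    refine ⟨fun a => ?_, ?_, fun a ha => ?_⟩
    · dsimp only [toTop]; split <;> norm_num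
    · erw [actL2_inr, Finset.sum_singleton]; simp [toTop]
    · erw [actL2_inr, Finset.mem_singleton] at ha; simp [toTop, ha]; exact ha

lemma toBot_mem1 {σ} (hσ : σ ∈ Strat (upperAbs G rU) (upperAbs G rU).act1) :
    toBot G σ ∈ Strat (lowerAbs G rU) (lowerAbs G rU).act1 := by
  intro h s
  cases s with
  | inl q =>
    obtain ⟨h1, h2, h3⟩ := hσ (histSwap G h) (Sum.inl q)
    refine ⟨fun a => h1 a, ?_, fun a ha => ?_⟩
    · rw [actL1_inl]; rw [actU1_inl] at h2; exact h2
    · exact h3 a (by rwa [actU1_inl, ← actL1_inl])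
  | inr d =>
    refine ⟨fun a => ?_, ?_, fun a ha => ?_⟩
    · dsimp only [toBot]; split <;> norm_num
    · erw [actL1_inr, Finset.sum_singleton]; simp [toBot]
    · erw [actL1_inr, Finset.mem_singleton] at ha; simp [toBot, ha]; exact ha

lemma toBot_mem2 {σ} (hσ : σ ∈ Strat (lowerAbs G rU) (lowerAbs G rU).act2) :
    toBot G σ ∈ Strat (upperAbs G rU) (upperAbs G rU).act2 := by
  intro h s
  cases s with
  | inl q =>
    obtain ⟨h1, h2, h3⟩ := hσ (histSwap G h) (Sum.inl q)
    refine ⟨fun a => h1 a, ?_, fun a ha => ?_⟩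
    · rw [actU2_inl]; rw [actL2_inl] at h2; exact h2
    · exact h3 a (by rwa [actL2_inl, ← actU2_inl])
  | inr d =>
    refine ⟨fun a => ?_, ?_, fun a ha => ?_⟩
    · dsimp only [toBot]; split <;> norm_num
    · erw [actU2_inr, Finset.sum_singleton]; simp [toBot]
    · erw [actU2_inr, Finset.mem_singleton] at ha; simp [toBot, ha]; exact ha

lemma iSup_eq_of_exists {ι κ : Sort*} (f : ι → ℝ) (g : κ → ℝ)
    (h1 : ∀ i, ∃ j, f i = g j) (h2 : ∀ j, ∃ i, f i = g j) : iSup f = iSup g := by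
  have hr : Set.range f = Set.range g := by
    ext x
    constructor
    · rintro ⟨i, rfl⟩; obtain ⟨j, hj⟩ := h1 i; exact ⟨j, hj.symm⟩
    · rintro ⟨j, rfl⟩; obtain ⟨i, hi⟩ := h2 j; exact ⟨i, hi⟩
  rw [iSup, iSup, hr]

lemma iInf_eq_of_exists {ι κ : Sort*} (f : ι → ℝ) (g : κ → ℝ)
    (h1 : ∀ i, ∃ j, f i = g j) (h2 : ∀ j, ∃ i, f i = g j) : iInf f = iInf g := by
  have hr : Set.range f = Set.range g := by
    ext x
    constructor
    · rintro ⟨i, rfl⟩; obtain ⟨j, hj⟩ := h1 i; exact ⟨j, hj.symm⟩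
    · rintro ⟨j, rfl⟩; obtain ⟨i, hi⟩ := h2 j; exact ⟨i, hi⟩
  rw [iInf, iInf, hr]

lemma inf_swap_eq (w : AbsS G rU → ℝ) (L : ℕ) (s : AbsS G rU)
    (σ1 τ1 : List (AbsS G rU × AbsA G rU × AbsA G rU) → AbsS G rU → AbsA G rU → ℝ)
    (hσ1 : σ1 ∈ Strat (lowerAbs G rU) (lowerAbs G rU).act1)
    (hτ1 : τ1 ∈ Strat (upperAbs G rU) (upperAbs G rU).act1)
    (hA1 : ∀ h q a, τ1 (histSwap G h) (Sum.inl q) a = σ1 h (Sum.inl q) a) :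
    (⨅ τ2 : Strat (upperAbs G rU) (upperAbs G rU).act2,
        expVal (upperAbs G rU) w τ1 τ2.1 L s []) =
      ⨅ σ2 : Strat (lowerAbs G rU) (lowerAbs G rU).act2,
        expVal (lowerAbs G rU) w σ1 σ2.1 L s [] := by
  apply iInf_eq_of_exists
  · intro τ2
    refine ⟨⟨toTop G τ2.1, toTop_mem2 G τ2.2⟩, ?_⟩
    exact expVal_swap G w σ1 (toTop G τ2.1) τ1 τ2.1 hσ1 (toTop_mem2 G τ2.2) hτ1 τ2.2
      hA1 (fun h q a => rfl) L s []
  · intro σ2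
    refine ⟨⟨toBot G σ2.1, toBot_mem2 G σ2.2⟩, ?_⟩
    exact expVal_swap G w σ1 σ2.1 τ1 (toBot G σ2.1) hσ1 σ2.2 hτ1 (toBot_mem2 G σ2.2)
      hA1 (agree_toBot G σ2.1) L s []

theorem unit_gval_eq (u : G.S → ℝ) (L : ℕ) :
    gval (upperAbs G rU) (upperU G rU u) L = gval (lowerAbs G rU) (lowerU G rU u) L := by
  rw [upperU_eq_lowerU]
  unfold gval valFrom
  apply iSup_eq_of_exists
  · intro τ1
    refine ⟨⟨toBot G τ1.1, toBot_mem1 G τ1.2⟩, ?_⟩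
    exact inf_swap_eq G (lowerU G rU u) L (Sum.inl (Quotient.mk rU G.s0))
      (toBot G τ1.1) τ1.1 (toBot_mem1 G τ1.2) τ1.2 (fun h q a => rfl)
  · intro σ1
    refine ⟨⟨toTop G σ1.1, toTop_mem1 G σ1.2⟩, ?_⟩
    exact inf_swap_eq G (lowerU G rU u) L (Sum.inl (Quotient.mk rU G.s0))
      σ1.1 (toTop G σ1.1) σ1.2 (toTop_mem1 G σ1.2) (agree_toTop G σ1.1)

end UnitAbs
/-- Completeness in the limit: every compatible partition admits a compatible
refinement whose upper and lower abstraction values differ by at most `ε`;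
in particular, for the unit partition the two values coincide. -/
theorem abstraction_completeness (G : ConcGame) (u : G.S → ℝ) (L : ℕ)
    (r1 : Setoid G.S) (hc1 : Compatible G r1) :
    (∀ ε : ℝ, 0 ≤ ε →
      ∃ r2 : Setoid G.S, (∀ s s', r2.r s s' → r1.r s s') ∧ Compatible G r2 ∧
        gval (upperAbs G r2) (upperU G r2 u) L
          - gval (lowerAbs G r2) (lowerU G r2 u) L ≤ ε) ∧
    gval (upperAbs G (unitSetoid G)) (upperU G (unitSetoid G) u) L
      = gval (lowerAbs G (unitSetoid G)) (lowerU G (unitSetoid G) u) L := by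
  have key := unit_gval_eq G u L
  refine ⟨fun ε hε => ⟨unitSetoid G, ?_, ?_, ?_⟩, key⟩
  · intro s s' hss'
    have : s = s' := hss'
    exact this ▸ r1.iseqv.refl s
  · intro s s' hss'
    have : s = s' := hss'
    exact ⟨this ▸ rfl, this ▸ rfl⟩
  · rw [key]; simpa using hε
end

section
/- Backward induction correctness for acyclic concurrent games: let (G, u) be a finite acyclic concurrent two-player zero-sum game structure (no state reachable from itself via a nonempty transition sequence, dead-ends allowed). Then for every non-dead-end state s, the value υ(G_s, u) equals the value of the finite matrix game with action sets Γ1(s), Γ2(s) and payoff v(a1, a2) = u(s) + υ(G_{δ(s,a1,a2)}, u); and for every dead-end state s, υ(G_s, u) = u(s). -/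
open scoped BigOperators

/-- A finite acyclic-style concurrent game structure: available-action sets may be
empty (dead-ends). -/
structure AGame where
  S : Type
  A : Type
  [fS : Fintype S]
  [dS : DecidableEq S]
  [fA : Fintype A]
  [dA : DecidableEq A]
  s0 : S
  act1 : S → Finset A
  act2 : S → Finset A
  tr : S → A → A → S

attribute [instance] AGame.fS AGame.dS AGame.fA AGame.dA

/-- One-step transition relation: `s'` is reachable from `s` by some valid
action pair. -/
def AGame.step (G : AGame) (s s' : G.S) : Prop :=
  ∃ a1 ∈ G.act1 s, ∃ a2 ∈ G.act2 s, G.tr s a1 a2 = s'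

/-- Acyclicity: no state is reachable from itself via a nonempty sequence of
transitions. -/
def AGame.Acyclic (G : AGame) : Prop :=
  ∀ s : G.S, ¬ Relation.TransGen G.step s s

/-- Memoryless mixed strategies for action map `act`: at every non-dead-end state,
a probability distribution supported on the available actions. -/
def MStrat (G : AGame) (act : G.S → Finset G.A) : Set (G.S → G.A → ℝ) :=
  {σ | ∀ s, (∀ a, 0 ≤ σ s a) ∧
        ((act s).Nonempty → ∑ a ∈ act s, σ s a = 1) ∧ ∀ a ∉ act s, σ s a = 0}

open Classical in
/-- Expected total utility of the memoryless profile `(σ1, σ2)` from state `s`: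
plays stop at dead-ends; since the game is acyclic, fuel `Fintype.card G.S`
suffices to exhaust every play. -/
noncomputable def aExp (G : AGame) (u : G.S → ℝ) (σ1 σ2 : G.S → G.A → ℝ) :
    ℕ → G.S → ℝ
  | 0, s => u s
  | (n + 1), s =>
      if (G.act1 s).Nonempty ∧ (G.act2 s).Nonempty then
        u s + ∑ a1 ∈ G.act1 s, ∑ a2 ∈ G.act2 s,
          σ1 s a1 * σ2 s a2 * aExp G u σ1 σ2 n (G.tr s a1 a2)
      else u s

/-- The value of the acyclic game started at `s`, over memoryless mixed
strategies. -/
noncomputable def aVal (G : AGame) (u : G.S → ℝ) (s : G.S) : ℝ :=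
  ⨆ σ1 : MStrat G G.act1, ⨅ σ2 : MStrat G G.act2,
    aExp G u σ1.1 σ2.1 (Fintype.card G.S) s

namespace BIproof

open Finset

variable (G : AGame) (u : G.S → ℝ)

/-! ### Reachability and a decreasing measure -/

open Classical in
noncomputable def reach (s : G.S) : Finset G.S :=
  Finset.univ.filter fun t => Relation.ReflTransGen G.step s t

noncomputable def kk (s : G.S) : ℕ := (reach G s).card

lemma self_mem_reach (s : G.S) : s ∈ reach G s := by
  simp only [reach, Finset.mem_filter, Finset.mem_univ, true_and]
  exact Relation.ReflTransGen.refl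

lemma kk_pos (s : G.S) : 1 ≤ kk G s :=
  Finset.card_pos.2 ⟨s, self_mem_reach G s⟩

lemma kk_le (s : G.S) : kk G s ≤ Fintype.card G.S :=
  Finset.card_le_univ _

lemma kk_lt (hacyc : G.Acyclic) {s s' : G.S} (h : G.step s s') : kk G s' < kk G s := by
  apply Finset.card_lt_card
  rw [Finset.ssubset_iff_of_subset]
  · refine ⟨s, self_mem_reach G s, ?_⟩
    simp only [reach, Finset.mem_filter, Finset.mem_univ, true_and]
    intro hr
    exact hacyc s (Relation.TransGen.head' h hr)
  · intro t ht
    simp only [reach, Finset.mem_filter, Finset.mem_univ, true_and] at ht ⊢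
    exact Relation.ReflTransGen.head h ht

lemma kk_tr_lt (hacyc : G.Acyclic) {s : G.S} {a1 a2 : G.A}
    (h1 : a1 ∈ G.act1 s) (h2 : a2 ∈ G.act2 s) : kk G (G.tr s a1 a2) < kk G s :=
  kk_lt G hacyc ⟨a1, h1, a2, h2, rfl⟩

lemma dead_of_kk_le_one (hacyc : G.Acyclic) {s : G.S} (h : kk G s ≤ 1) :
    ¬((G.act1 s).Nonempty ∧ (G.act2 s).Nonempty) := by
  rintro ⟨⟨a1, h1⟩, ⟨a2, h2⟩⟩
  have h3 := kk_tr_lt G hacyc h1 h2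
  have h4 := kk_pos G (G.tr s a1 a2)
  omega

lemma two_le_kk (hacyc : G.Acyclic) {s : G.S}
    (hc : (G.act1 s).Nonempty ∧ (G.act2 s).Nonempty) : 2 ≤ kk G s := by
  obtain ⟨⟨a1, h1⟩, ⟨a2, h2⟩⟩ := hc
  have h3 := kk_tr_lt G hacyc h1 h2
  have h4 := kk_pos G (G.tr s a1 a2)
  omega

/-! ### Basic equations for `aExp` -/

lemma aExp_zero (σ1 σ2 : G.S → G.A → ℝ) (s : G.S) : aExp G u σ1 σ2 0 s = u s := rfl

open Classical in
lemma aExp_succ (σ1 σ2 : G.S → G.A → ℝ) (n : ℕ) (s : G.S) :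
    aExp G u σ1 σ2 (n + 1) s =
      if (G.act1 s).Nonempty ∧ (G.act2 s).Nonempty then
        u s + ∑ a1 ∈ G.act1 s, ∑ a2 ∈ G.act2 s,
          σ1 s a1 * σ2 s a2 * aExp G u σ1 σ2 n (G.tr s a1 a2)
      else u s := rfl

lemma aExp_dead (σ1 σ2 : G.S → G.A → ℝ) {s : G.S}
    (h : ¬((G.act1 s).Nonempty ∧ (G.act2 s).Nonempty)) (n : ℕ) :
    aExp G u σ1 σ2 n s = u s := by
  cases n with
  | zero => rfl
  | succ n => rw [aExp_succ, if_neg h]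

lemma aExp_stable (hacyc : G.Acyclic) (σ1 σ2 : G.S → G.A → ℝ) :
    ∀ n m s, kk G s ≤ n + 1 → kk G s ≤ m + 1 →
      aExp G u σ1 σ2 n s = aExp G u σ1 σ2 m s := by
  intro n
  induction n with
  | zero =>
    intro m s hn _
    rw [aExp_zero, aExp_dead G u σ1 σ2 (dead_of_kk_le_one G hacyc hn) m]
  | succ n ih =>
    intro m s hn hm
    by_cases hc : (G.act1 s).Nonempty ∧ (G.act2 s).Nonempty
    · have h2 := two_le_kk G hacyc hc
      obtain ⟨m', rfl⟩ : ∃ m', m = m' + 1 := by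
        cases m with
        | zero => omega
        | succ m' => exact ⟨m', rfl⟩
      rw [aExp_succ, aExp_succ, if_pos hc, if_pos hc]
      congr 1
      refine Finset.sum_congr rfl fun a1 h1 => Finset.sum_congr rfl fun a2 ha2 => ?_
      have hlt := kk_tr_lt G hacyc h1 ha2
      congr 1
      exact ih m' (G.tr s a1 a2) (by omega) (by omega)
    · rw [aExp_dead G u σ1 σ2 hc, aExp_dead G u σ1 σ2 hc]

lemma aExp_rec (hacyc : G.Acyclic) (σ1 σ2 : G.S → G.A → ℝ) {s : G.S}
    (hc : (G.act1 s).Nonempty ∧ (G.act2 s).Nonempty) :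
    aExp G u σ1 σ2 (Fintype.card G.S) s
      = u s + ∑ a1 ∈ G.act1 s, ∑ a2 ∈ G.act2 s,
          σ1 s a1 * σ2 s a2 * aExp G u σ1 σ2 (Fintype.card G.S) (G.tr s a1 a2) := by
  haveI : Nonempty G.S := ⟨G.s0⟩
  obtain ⟨M, hM⟩ : ∃ M, Fintype.card G.S = M + 1 :=
    ⟨Fintype.card G.S - 1, (Nat.succ_pred_eq_of_pos Fintype.card_pos).symm⟩
  rw [hM, aExp_succ, if_pos hc]
  congr 1
  refine Finset.sum_congr rfl fun a1 h1 => Finset.sum_congr rfl fun a2 h2 => ?_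
  congr 1
  refine aExp_stable G u hacyc σ1 σ2 M (M + 1) (G.tr s a1 a2) ?_ ?_
  · have := kk_tr_lt G hacyc h1 h2
    have := kk_le G s
    omega
  · have := kk_le G (G.tr s a1 a2)
    omega


/-! ### Bounds -/

noncomputable def Cb : ℝ := Finset.univ.sup' ⟨G.s0, Finset.mem_univ _⟩ fun s => |u s|

lemma abs_u_le (s : G.S) : |u s| ≤ Cb G u := by
  unfold Cb
  exact Finset.le_sup' (fun s => |u s|) (Finset.mem_univ s)

lemma Cb_nonneg : 0 ≤ Cb G u := le_trans (abs_nonneg _) (abs_u_le G u G.s0)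

lemma sum_weights {ι κ : Type*} {s : Finset ι} {t : Finset κ} {f : ι → ℝ} {g : κ → ℝ}
    (h1 : ∑ i ∈ s, f i = 1) (h2 : ∑ j ∈ t, g j = 1) :
    ∑ i ∈ s, ∑ j ∈ t, f i * g j = 1 := by
  rw [← Finset.sum_mul_sum, h1, h2, one_mul]

lemma double_weight_const {ι κ : Type*} {s : Finset ι} {t : Finset κ} {f : ι → ℝ} {g : κ → ℝ}
    (h1 : ∑ i ∈ s, f i = 1) (h2 : ∑ j ∈ t, g j = 1) (c : ℝ) :
    ∑ i ∈ s, ∑ j ∈ t, f i * g j * c = c := by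
  simp only [← Finset.sum_mul]
  rw [sum_weights h1 h2, one_mul]

lemma double_split {ι κ : Type*} {s : Finset ι} {t : Finset κ} {f : ι → ℝ} {g : κ → ℝ}
    (h1 : ∑ i ∈ s, f i = 1) (h2 : ∑ j ∈ t, g j = 1) (c : ℝ) (x : ι → κ → ℝ) :
    ∑ i ∈ s, ∑ j ∈ t, f i * g j * (c + x i j)
      = c + ∑ i ∈ s, ∑ j ∈ t, f i * g j * x i j := by
  simp only [mul_add, Finset.sum_add_distrib]
  rw [double_weight_const h1 h2]

lemma double_shift {ι κ : Type*} {s : Finset ι} {t : Finset κ} {f : ι → ℝ} {g : κ → ℝ}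
    (h1 : ∑ i ∈ s, f i = 1) (h2 : ∑ j ∈ t, g j = 1) (c : ℝ) (x : ι → κ → ℝ) :
    ∑ i ∈ s, ∑ j ∈ t, f i * g j * (x i j - c)
      = (∑ i ∈ s, ∑ j ∈ t, f i * g j * x i j) - c := by
  simp only [mul_sub, Finset.sum_sub_distrib]
  rw [double_weight_const h1 h2]

lemma double_bound {ι κ : Type*} {s : Finset ι} {t : Finset κ} {f : ι → ℝ} {g : κ → ℝ}
    {x : ι → κ → ℝ} {B : ℝ} (_hB : 0 ≤ B)
    (hf : ∀ i, 0 ≤ f i) (hg : ∀ j, 0 ≤ g j) (hx : ∀ i ∈ s, ∀ j ∈ t, |x i j| ≤ B)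
    (h1 : ∑ i ∈ s, f i = 1) (h2 : ∑ j ∈ t, g j = 1) :
    |∑ i ∈ s, ∑ j ∈ t, f i * g j * x i j| ≤ B := by
  calc |∑ i ∈ s, ∑ j ∈ t, f i * g j * x i j|
      ≤ ∑ i ∈ s, ∑ j ∈ t, |f i * g j * x i j| :=
        (Finset.abs_sum_le_sum_abs _ _).trans
          (Finset.sum_le_sum fun i _ => Finset.abs_sum_le_sum_abs _ _)
    _ ≤ ∑ i ∈ s, ∑ j ∈ t, f i * g j * B := by
        refine Finset.sum_le_sum fun i hi => Finset.sum_le_sum fun j hj => ?_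
        rw [abs_mul, abs_mul, abs_of_nonneg (hf i), abs_of_nonneg (hg j)]
        exact mul_le_mul_of_nonneg_left (hx i hi j hj) (mul_nonneg (hf i) (hg j))
    _ = B := double_weight_const h1 h2 B

lemma aExp_bound {σ1 σ2 : G.S → G.A → ℝ}
    (h1 : σ1 ∈ MStrat G G.act1) (h2 : σ2 ∈ MStrat G G.act2) :
    ∀ n s, |aExp G u σ1 σ2 n s| ≤ (n + 1 : ℝ) * Cb G u := by
  intro n
  induction n with
  | zero =>
    intro s
    simpa [aExp_zero] using abs_u_le G u s
  | succ n ih =>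
    intro s
    have hC := Cb_nonneg G u
    rw [aExp_succ]
    split_ifs with hc
    · have key : |∑ a1 ∈ G.act1 s, ∑ a2 ∈ G.act2 s,
          σ1 s a1 * σ2 s a2 * aExp G u σ1 σ2 n (G.tr s a1 a2)| ≤ (n + 1 : ℝ) * Cb G u := by
        refine double_bound (by positivity) (fun a => (h1 s).1 a) (fun a => (h2 s).1 a)
          (fun a1 _ a2 _ => ih _) ((h1 s).2.1 hc.1) ((h2 s).2.1 hc.2)
      have habs := abs_add_le (u s) (∑ a1 ∈ G.act1 s, ∑ a2 ∈ G.act2 s,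
          σ1 s a1 * σ2 s a2 * aExp G u σ1 σ2 n (G.tr s a1 a2))
      have hu := abs_u_le G u s
      push_cast
      nlinarith
    · have hu := abs_u_le G u s
      push_cast
      nlinarith

/-! ### Matrix game lemmas -/

lemma mixed_nonempty (α : Type) [Fintype α] [Nonempty α] : (MixedStrat α).Nonempty := by
  refine ⟨fun _ => (Fintype.card α : ℝ)⁻¹, fun a => by positivity, ?_⟩
  rw [Finset.sum_const, Finset.card_univ, nsmul_eq_mul, mul_inv_cancel₀]
  exact_mod_cast Fintype.card_ne_zero

lemma expPay_le {α β : Type} [Fintype α] [Fintype β] {v : α → β → ℝ} {p q} {M : ℝ}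
    (hp : p ∈ MixedStrat α) (hq : q ∈ MixedStrat β) (hM : ∀ a b, v a b ≤ M) :
    expPay v p q ≤ M := by
  calc expPay v p q ≤ ∑ a, ∑ b, p a * q b * M := by
        refine Finset.sum_le_sum fun a _ => Finset.sum_le_sum fun b _ => ?_
        exact mul_le_mul_of_nonneg_left (hM a b) (mul_nonneg (hp.1 a) (hq.1 b))
    _ = M := double_weight_const hp.2 hq.2 M

lemma le_expPay {α β : Type} [Fintype α] [Fintype β] {v : α → β → ℝ} {p q} {m : ℝ}
    (hp : p ∈ MixedStrat α) (hq : q ∈ MixedStrat β) (hm : ∀ a b, m ≤ v a b) :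
    m ≤ expPay v p q := by
  calc m = ∑ a, ∑ b, p a * q b * m := (double_weight_const hp.2 hq.2 m).symm
    _ ≤ expPay v p q := by
        refine Finset.sum_le_sum fun a _ => Finset.sum_le_sum fun b _ => ?_
        exact mul_le_mul_of_nonneg_left (hm a b) (mul_nonneg (hp.1 a) (hq.1 b))

lemma matVal_le {α β : Type} [Fintype α] [Fintype β] [Nonempty α] [Nonempty β]
    {v : α → β → ℝ} {m M : ℝ}
    (hm : ∀ a b, m ≤ v a b) (hM : ∀ a b, v a b ≤ M) : matVal α β v ≤ M := by
  haveI := (mixed_nonempty α).to_subtype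
  haveI := (mixed_nonempty β).to_subtype
  refine ciSup_le fun p => ?_
  obtain ⟨q0, hq0⟩ := mixed_nonempty β
  refine ciInf_le_of_le ⟨m, ?_⟩ ⟨q0, hq0⟩ (expPay_le p.2 hq0 hM)
  rintro x ⟨q, rfl⟩
  exact le_expPay p.2 q.2 hm

lemma le_matVal {α β : Type} [Fintype α] [Fintype β] [Nonempty α] [Nonempty β]
    {v : α → β → ℝ} {m M c : ℝ} {p : α → ℝ}
    (hm : ∀ a b, m ≤ v a b) (hM : ∀ a b, v a b ≤ M)
    (hp : p ∈ MixedStrat α) (hc : ∀ q ∈ MixedStrat β, c ≤ expPay v p q) :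
    c ≤ matVal α β v := by
  haveI := (mixed_nonempty α).to_subtype
  haveI := (mixed_nonempty β).to_subtype
  obtain ⟨q0, hq0⟩ := mixed_nonempty β
  refine le_ciSup_of_le ⟨M, ?_⟩ ⟨p, hp⟩ (le_ciInf fun q => hc q.1 q.2)
  rintro x ⟨p', rfl⟩
  refine ciInf_le_of_le ⟨m, ?_⟩ ⟨q0, hq0⟩ (expPay_le p'.2 hq0 hM)
  rintro x ⟨q, rfl⟩
  exact le_expPay p'.2 q.2 hm

lemma le_matVal' {α β : Type} [Fintype α] [Fintype β] [Nonempty α] [Nonempty β]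
    {v : α → β → ℝ} {M : ℝ} (hM : ∀ a b, |v a b| ≤ M) : |matVal α β v| ≤ M := by
  rw [abs_le]
  obtain ⟨p0, hp0⟩ := mixed_nonempty α
  constructor
  · exact le_matVal (fun a b => (abs_le.1 (hM a b)).1) (fun a b => (abs_le.1 (hM a b)).2)
      hp0 (fun q hq => le_expPay hp0 hq fun a b => (abs_le.1 (hM a b)).1)
  · exact matVal_le (fun a b => (abs_le.1 (hM a b)).1) fun a b => (abs_le.1 (hM a b)).2

lemma exists_good_row {α β : Type} [Fintype α] [Fintype β] [Nonempty α] [Nonempty β]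
    {v : α → β → ℝ} {m c : ℝ} (hm : ∀ a b, m ≤ v a b) (h : c < matVal α β v) :
    ∃ p ∈ MixedStrat α, ∀ q ∈ MixedStrat β, c < expPay v p q := by
  haveI := (mixed_nonempty α).to_subtype
  haveI := (mixed_nonempty β).to_subtype
  obtain ⟨p, hp⟩ := exists_lt_of_lt_ciSup h
  refine ⟨p.1, p.2, fun q hq => hp.trans_le (ciInf_le_of_le ⟨m, ?_⟩ ⟨q, hq⟩ le_rfl)⟩
  rintro x ⟨q', rfl⟩
  exact le_expPay p.2 q'.2 hm


/-! ### Strategy helpers -/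

lemma mstrat_nonempty (act : G.S → Finset G.A) : (MStrat G act).Nonempty := by
  classical
  refine ⟨fun s a => if a ∈ act s then ((act s).card : ℝ)⁻¹ else 0, fun s => ⟨?_, ?_, ?_⟩⟩
  · intro a
    dsimp only
    split_ifs
    · positivity
    · exact le_rfl
  · intro hne
    dsimp only
    rw [Finset.sum_congr rfl fun a ha => if_pos ha, Finset.sum_const, nsmul_eq_mul,
      mul_inv_cancel₀]
    exact_mod_cast Finset.card_ne_zero_of_mem hne.choose_spec
  · intro a ha
    dsimp only
    exact if_neg ha

lemma restr_mem {act : G.S → Finset G.A} {σ : G.S → G.A → ℝ} (hσ : σ ∈ MStrat G act)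
    {s : G.S} (hs : (act s).Nonempty) :
    (fun a : {a // a ∈ act s} => σ s a.1) ∈ MixedStrat {a // a ∈ act s} := by
  refine ⟨fun a => (hσ s).1 a.1, ?_⟩
  rw [Finset.sum_coe_sort (act s) (σ s)]
  exact (hσ s).2.1 hs

lemma expPay_subtype (s : G.S) (v' : G.A → G.A → ℝ) (p q : G.A → ℝ) :
    expPay (fun (a1 : {a // a ∈ G.act1 s}) (a2 : {a // a ∈ G.act2 s}) => v' a1.1 a2.1)
      (fun a1 => p a1.1) (fun a2 => q a2.1)
      = ∑ a1 ∈ G.act1 s, ∑ a2 ∈ G.act2 s, p a1 * q a2 * v' a1 a2 := by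
  rw [expPay]
  rw [Finset.sum_coe_sort (G.act1 s)
    (fun a1 => ∑ a2 : {a // a ∈ G.act2 s}, p a1 * q a2.1 * v' a1 a2.1)]
  exact Finset.sum_congr rfl fun a1 _ =>
    Finset.sum_coe_sort (G.act2 s) (fun a2 => p a1 * q a2 * v' a1 a2)

/-! ### The backward-induction value function -/

open Classical in
noncomputable def Wf : ℕ → G.S → ℝ
  | 0, s => u s
  | (n + 1), s =>
      if (G.act1 s).Nonempty ∧ (G.act2 s).Nonempty then
        matVal {a // a ∈ G.act1 s} {a // a ∈ G.act2 s}
          (fun a1 a2 => u s + Wf n (G.tr s a1.1 a2.1))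
      else u s

open Classical in
lemma Wf_succ (n : ℕ) (s : G.S) :
    Wf G u (n + 1) s =
      if (G.act1 s).Nonempty ∧ (G.act2 s).Nonempty then
        matVal {a // a ∈ G.act1 s} {a // a ∈ G.act2 s}
          (fun a1 a2 => u s + Wf G u n (G.tr s a1.1 a2.1))
      else u s := rfl

lemma Wf_dead {s : G.S} (h : ¬((G.act1 s).Nonempty ∧ (G.act2 s).Nonempty)) (n : ℕ) :
    Wf G u n s = u s := by
  cases n with
  | zero => rfl
  | succ n => rw [Wf_succ, if_neg h]

lemma Wf_stable (hacyc : G.Acyclic) :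
    ∀ n m s, kk G s ≤ n + 1 → kk G s ≤ m + 1 → Wf G u n s = Wf G u m s := by
  intro n
  induction n with
  | zero =>
    intro m s hn _
    rw [show Wf G u 0 s = u s from rfl, Wf_dead G u (dead_of_kk_le_one G hacyc hn) m]
  | succ n ih =>
    intro m s hn hm
    by_cases hc : (G.act1 s).Nonempty ∧ (G.act2 s).Nonempty
    · have h2 := two_le_kk G hacyc hc
      obtain ⟨m', rfl⟩ : ∃ m', m = m' + 1 := by
        cases m with
        | zero => omega
        | succ m' => exact ⟨m', rfl⟩
      rw [Wf_succ, Wf_succ, if_pos hc, if_pos hc]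
      congr 1
      funext a1 a2
      have hlt := kk_tr_lt G hacyc a1.2 a2.2
      rw [ih m' (G.tr s a1.1 a2.1) (by omega) (by omega)]
    · rw [Wf_dead G u hc, Wf_dead G u hc]

noncomputable def W (s : G.S) : ℝ := Wf G u (Fintype.card G.S) s

lemma W_dead {s : G.S} (h : ¬((G.act1 s).Nonempty ∧ (G.act2 s).Nonempty)) :
    W G u s = u s := Wf_dead G u h _

lemma W_rec (hacyc : G.Acyclic) {s : G.S}
    (hc : (G.act1 s).Nonempty ∧ (G.act2 s).Nonempty) :
    W G u s = matVal {a // a ∈ G.act1 s} {a // a ∈ G.act2 s}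
      (fun a1 a2 => u s + W G u (G.tr s a1.1 a2.1)) := by
  haveI : Nonempty G.S := ⟨G.s0⟩
  obtain ⟨M, hM⟩ : ∃ M, Fintype.card G.S = M + 1 :=
    ⟨Fintype.card G.S - 1, (Nat.succ_pred_eq_of_pos Fintype.card_pos).symm⟩
  rw [W, hM, Wf_succ, if_pos hc]
  congr 1
  funext a1 a2
  rw [W, hM]
  congr 1
  refine Wf_stable G u hacyc M (M + 1) (G.tr s a1.1 a2.1) ?_ ?_
  · have := kk_tr_lt G hacyc a1.2 a2.2
    have := kk_le G s
    omega
  · have := kk_le G (G.tr s a1.1 a2.1)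
    omega

lemma Wf_bound : ∀ n s, |Wf G u n s| ≤ (n + 1 : ℝ) * Cb G u := by
  intro n
  induction n with
  | zero =>
    intro s
    simpa [Wf] using abs_u_le G u s
  | succ n ih =>
    intro s
    have hC := Cb_nonneg G u
    rw [Wf_succ]
    split_ifs with hc
    · haveI : Nonempty {a // a ∈ G.act1 s} := ⟨⟨hc.1.choose, hc.1.choose_spec⟩⟩
      haveI : Nonempty {a // a ∈ G.act2 s} := ⟨⟨hc.2.choose, hc.2.choose_spec⟩⟩
      have key : ∀ (a1 : {a // a ∈ G.act1 s}) (a2 : {a // a ∈ G.act2 s}),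
          |u s + Wf G u n (G.tr s a1.1 a2.1)| ≤ ((n : ℝ) + 1 + 1) * Cb G u := by
        intro a1 a2
        have h1 := abs_add_le (u s) (Wf G u n (G.tr s a1.1 a2.1))
        have h2 := abs_u_le G u s
        have h3 := ih (G.tr s a1.1 a2.1)
        nlinarith
      have := le_matVal' key
      push_cast
      push_cast at this
      linarith
    · have hu := abs_u_le G u s
      push_cast
      nlinarith

noncomputable def Db : ℝ := ((Fintype.card G.S : ℝ) + 1) * Cb G u

lemma W_bound (s : G.S) : |W G u s| ≤ Db G u := Wf_bound G u _ s

lemma Db_nonneg : 0 ≤ Db G u := by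
  have := Cb_nonneg G u
  have : (0:ℝ) ≤ (Fintype.card G.S : ℝ) + 1 := by positivity
  unfold Db
  nlinarith [Cb_nonneg G u]

lemma aExpN_bound {σ1 σ2 : G.S → G.A → ℝ}
    (h1 : σ1 ∈ MStrat G G.act1) (h2 : σ2 ∈ MStrat G G.act2) (s : G.S) :
    |aExp G u σ1 σ2 (Fintype.card G.S) s| ≤ Db G u :=
  aExp_bound G u h1 h2 _ s


/-! ### Boundedness of the value families -/

lemma bddBelow_inner {σ1 : G.S → G.A → ℝ} (h1 : σ1 ∈ MStrat G G.act1) (s : G.S) :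
    BddBelow (Set.range fun σ2 : ↥(MStrat G G.act2) =>
      aExp G u σ1 σ2.1 (Fintype.card G.S) s) := by
  refine ⟨-Db G u, ?_⟩
  rintro x ⟨σ2, rfl⟩
  exact neg_le_of_abs_le (aExpN_bound G u h1 σ2.2 s)

lemma bddAbove_outer (s : G.S) :
    BddAbove (Set.range fun σ1 : ↥(MStrat G G.act1) =>
      ⨅ σ2 : ↥(MStrat G G.act2), aExp G u σ1.1 σ2.1 (Fintype.card G.S) s) := by
  haveI : Nonempty ↥(MStrat G G.act2) := (mstrat_nonempty G G.act2).to_subtype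
  refine ⟨Db G u, ?_⟩
  rintro x ⟨σ1, rfl⟩
  obtain ⟨σ2⟩ := (inferInstance : Nonempty ↥(MStrat G G.act2))
  exact ciInf_le_of_le (bddBelow_inner G u σ1.2 s) σ2
    (le_of_abs_le (aExpN_bound G u σ1.2 σ2.2 s))

/-! ### Direction I : `aVal ≤ W` -/

lemma aVal_le_W (hacyc : G.Acyclic) (s : G.S) : aVal G u s ≤ W G u s := by
  classical
  haveI : Nonempty ↥(MStrat G G.act1) := (mstrat_nonempty G G.act1).to_subtype
  haveI : Nonempty ↥(MStrat G G.act2) := (mstrat_nonempty G G.act2).to_subtype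
  rw [aVal]
  refine ciSup_le fun σ1 => ?_
  set g : G.S → G.A → ℝ :=
    fun t b => ∑ a1 ∈ G.act1 t, σ1.1 t a1 * (u t + W G u (G.tr t a1 b)) with hg
  have hch : ∀ t : G.S, ∃ w : G.A → ℝ, (∀ a, 0 ≤ w a) ∧
      ((G.act2 t).Nonempty → ∑ a ∈ G.act2 t, w a = 1) ∧ (∀ a ∉ G.act2 t, w a = 0) ∧
      ((G.act2 t).Nonempty → ∃ b ∈ G.act2 t, (∀ b' ∈ G.act2 t, g t b ≤ g t b') ∧
        w = fun a => if a = b then 1 else 0) := by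
    intro t
    by_cases h : (G.act2 t).Nonempty
    · obtain ⟨b, hb, hmin⟩ := Finset.exists_min_image (G.act2 t) (g t) h
      refine ⟨fun a => if a = b then 1 else 0, ?_, ?_, ?_, ?_⟩
      · intro a; dsimp only; split_ifs <;> norm_num
      · intro _
        rw [Finset.sum_ite_eq' (G.act2 t) b fun _ => (1:ℝ), if_pos hb]
      · intro a ha
        have hne : a ≠ b := fun h' => ha (h' ▸ hb)
        dsimp only
        rw [if_neg hne]
      · exact fun _ => ⟨b, hb, hmin, rfl⟩
    · exact ⟨fun _ => 0, fun _ => le_rfl, fun hne => absurd hne h, fun _ _ => rfl,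
        fun hne => absurd hne h⟩
  choose σ2 hpos hsum hzero hbest using hch
  have hσ2 : σ2 ∈ MStrat G G.act2 := fun t => ⟨hpos t, hsum t, hzero t⟩
  have main : ∀ n t, kk G t ≤ n → aExp G u σ1.1 σ2 (Fintype.card G.S) t ≤ W G u t := by
    intro n
    induction n with
    | zero =>
      intro t ht
      have := kk_pos G t
      omega
    | succ n ih =>
      intro t ht
      by_cases hc : (G.act1 t).Nonempty ∧ (G.act2 t).Nonempty
      · obtain ⟨b, hbmem, hbmin, hw⟩ := hbest t hc.2
        have hs1 := (σ1.2 t).2.1 hc.1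
        rw [aExp_rec G u hacyc _ _ hc]
        have hcol : ∀ a1 ∈ G.act1 t, ∑ a2 ∈ G.act2 t, σ1.1 t a1 * σ2 t a2 *
            aExp G u σ1.1 σ2 (Fintype.card G.S) (G.tr t a1 a2)
            = σ1.1 t a1 * aExp G u σ1.1 σ2 (Fintype.card G.S) (G.tr t a1 b) := by
          intro a1 _
          rw [hw]
          rw [Finset.sum_eq_single_of_mem b hbmem (fun b' _ hb' => by simp [hb'])]
          simp
        rw [Finset.sum_congr rfl hcol]
        have step1 : u t + ∑ a1 ∈ G.act1 t, σ1.1 t a1 *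
            aExp G u σ1.1 σ2 (Fintype.card G.S) (G.tr t a1 b)
            ≤ u t + ∑ a1 ∈ G.act1 t, σ1.1 t a1 * W G u (G.tr t a1 b) := by
          refine add_le_add_right (Finset.sum_le_sum fun a1 h1 => ?_) _
          refine mul_le_mul_of_nonneg_left ?_ ((σ1.2 t).1 a1)
          refine ih (G.tr t a1 b) ?_
          have := kk_tr_lt G hacyc h1 hbmem
          omega
        have step2 : u t + ∑ a1 ∈ G.act1 t, σ1.1 t a1 * W G u (G.tr t a1 b) = g t b := by
          rw [hg]
          dsimp only
          simp only [mul_add, Finset.sum_add_distrib, ← Finset.sum_mul, hs1, one_mul]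
        have step3 : g t b ≤ W G u t := by
          haveI : Nonempty {a // a ∈ G.act1 t} := ⟨⟨hc.1.choose, hc.1.choose_spec⟩⟩
          haveI : Nonempty {a // a ∈ G.act2 t} := ⟨⟨hc.2.choose, hc.2.choose_spec⟩⟩
          rw [W_rec G u hacyc hc]
          have hbnd : ∀ (a1 : {a // a ∈ G.act1 t}) (a2 : {a // a ∈ G.act2 t}),
              |u t + W G u (G.tr t a1.1 a2.1)| ≤ Cb G u + Db G u := by
            intro a1 a2
            have e1 := abs_add_le (u t) (W G u (G.tr t a1.1 a2.1))
            have e2 := abs_u_le G u t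
            have e3 := W_bound G u (G.tr t a1.1 a2.1)
            linarith
          refine le_matVal (m := -(Cb G u + Db G u)) (M := Cb G u + Db G u)
            (fun a1 a2 => neg_le_of_abs_le (hbnd a1 a2))
            (fun a1 a2 => le_of_abs_le (hbnd a1 a2))
            (restr_mem G σ1.2 hc.1) ?_
          intro q hq
          have hswap : expPay
              (fun (a1 : {a // a ∈ G.act1 t}) (a2 : {a // a ∈ G.act2 t}) =>
                u t + W G u (G.tr t a1.1 a2.1))
              (fun a1 : {a // a ∈ G.act1 t} => σ1.1 t a1.1) q
              = ∑ b' : {a // a ∈ G.act2 t}, q b' * g t b'.1 := by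
            rw [expPay, Finset.sum_comm]
            refine Finset.sum_congr rfl fun b' _ => ?_
            rw [hg]
            dsimp only
            rw [Finset.mul_sum, ← Finset.sum_coe_sort (G.act1 t)
              (fun a1 => q b' * (σ1.1 t a1 * (u t + W G u (G.tr t a1 b'.1))))]
            exact Finset.sum_congr rfl fun a1 _ => by ring
          rw [hswap]
          calc g t b = ∑ b' : {a // a ∈ G.act2 t}, q b' * g t b := by
                rw [← Finset.sum_mul, hq.2, one_mul]
            _ ≤ ∑ b' : {a // a ∈ G.act2 t}, q b' * g t b'.1 :=
                Finset.sum_le_sum fun b' _ =>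
                  mul_le_mul_of_nonneg_left (hbmin b'.1 b'.2) (hq.1 b')
        exact le_trans step1 (step2 ▸ step3)
      · rw [aExp_dead G u _ _ hc, W_dead G u hc]
  exact ciInf_le_of_le (bddBelow_inner G u σ1.2 s) ⟨σ2, hσ2⟩ (main (kk G s) s le_rfl)


/-! ### Direction II : `W ≤ aVal` -/

lemma W_le_aVal (hacyc : G.Acyclic) (s : G.S) : W G u s ≤ aVal G u s := by
  classical
  haveI : Nonempty G.S := ⟨G.s0⟩
  haveI : Nonempty ↥(MStrat G G.act1) := (mstrat_nonempty G G.act1).to_subtype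
  haveI : Nonempty ↥(MStrat G G.act2) := (mstrat_nonempty G G.act2).to_subtype
  refine le_of_forall_pos_le_add fun ε hε => ?_
  have hcard : (0:ℝ) < (Fintype.card G.S : ℝ) := by
    exact_mod_cast Fintype.card_pos
  set ε0 : ℝ := ε / (Fintype.card G.S : ℝ) with hε0
  have hε0pos : 0 < ε0 := div_pos hε hcard
  -- choose an ε0-optimal mixed action for player 1 at every state
  have hch : ∀ t : G.S, ∃ w : G.A → ℝ, (∀ a, 0 ≤ w a) ∧
      ((G.act1 t).Nonempty → ∑ a ∈ G.act1 t, w a = 1) ∧ (∀ a ∉ G.act1 t, w a = 0) ∧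
      (((G.act1 t).Nonempty ∧ (G.act2 t).Nonempty) →
        ∀ q ∈ MixedStrat {a // a ∈ G.act2 t},
          W G u t - ε0 < expPay
            (fun (a1 : {a // a ∈ G.act1 t}) (a2 : {a // a ∈ G.act2 t}) =>
              u t + W G u (G.tr t a1.1 a2.1))
            (fun a1 => w a1.1) q) := by
    intro t
    by_cases hc : (G.act1 t).Nonempty ∧ (G.act2 t).Nonempty
    · haveI : Nonempty {a // a ∈ G.act1 t} := ⟨⟨hc.1.choose, hc.1.choose_spec⟩⟩
      haveI : Nonempty {a // a ∈ G.act2 t} := ⟨⟨hc.2.choose, hc.2.choose_spec⟩⟩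
      have hbnd : ∀ (a1 : {a // a ∈ G.act1 t}) (a2 : {a // a ∈ G.act2 t}),
          |u t + W G u (G.tr t a1.1 a2.1)| ≤ Cb G u + Db G u := by
        intro a1 a2
        have e1 := abs_add_le (u t) (W G u (G.tr t a1.1 a2.1))
        have e2 := abs_u_le G u t
        have e3 := W_bound G u (G.tr t a1.1 a2.1)
        linarith
      have hlt : W G u t - ε0 < matVal {a // a ∈ G.act1 t} {a // a ∈ G.act2 t}
          (fun a1 a2 => u t + W G u (G.tr t a1.1 a2.1)) := by
        rw [← W_rec G u hacyc hc]
        linarith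
      obtain ⟨p, hpmem, hp⟩ := exists_good_row
        (fun a1 a2 => neg_le_of_abs_le (hbnd a1 a2)) hlt
      refine ⟨fun a => if h : a ∈ G.act1 t then p ⟨a, h⟩ else 0, ?_, ?_, ?_, ?_⟩
      · intro a
        dsimp only
        split_ifs with h
        · exact hpmem.1 _
        · exact le_rfl
      · intro _
        rw [← Finset.sum_coe_sort (G.act1 t)
          (fun a => if h : a ∈ G.act1 t then p ⟨a, h⟩ else 0)]
        rw [Finset.sum_congr rfl fun (i : {a // a ∈ G.act1 t}) _ => dif_pos i.2]
        calc ∑ i : {a // a ∈ G.act1 t}, p ⟨i.1, i.2⟩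
            = ∑ i : {a // a ∈ G.act1 t}, p i := Finset.sum_congr rfl fun i _ => rfl
          _ = 1 := hpmem.2
      · intro a ha
        exact dif_neg ha
      · intro _ q hq
        have hrestr : (fun a1 : {a // a ∈ G.act1 t} =>
            if h : a1.1 ∈ G.act1 t then p ⟨a1.1, h⟩ else 0) = p := by
          funext a1
          rw [dif_pos a1.2]
        rw [hrestr]
        exact hp q hq
    · refine ⟨fun a => if a ∈ G.act1 t then ((G.act1 t).card : ℝ)⁻¹ else 0, ?_, ?_, ?_,
        fun h => absurd h hc⟩
      · intro a
        dsimp only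
        split_ifs
        · positivity
        · exact le_rfl
      · intro hne
        dsimp only
        rw [Finset.sum_congr rfl fun a ha => if_pos ha, Finset.sum_const, nsmul_eq_mul,
          mul_inv_cancel₀]
        exact_mod_cast Finset.card_ne_zero_of_mem hne.choose_spec
      · intro a ha
        dsimp only
        exact if_neg ha
  choose σ1 hpos hsum hzero hopt using hch
  have hσ1 : σ1 ∈ MStrat G G.act1 := fun t => ⟨hpos t, hsum t, hzero t⟩
  have main : ∀ n t, kk G t ≤ n → ∀ σ2 ∈ MStrat G G.act2,
      W G u t - (kk G t : ℝ) * ε0 ≤ aExp G u σ1 σ2 (Fintype.card G.S) t := by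
    intro n
    induction n with
    | zero =>
      intro t ht
      have := kk_pos G t
      omega
    | succ n ih =>
      intro t ht σ2 hσ2
      by_cases hc : (G.act1 t).Nonempty ∧ (G.act2 t).Nonempty
      · have hs1 := hsum t hc.1
        have hs2 := (hσ2 t).2.1 hc.2
        have hkk := two_le_kk G hacyc hc
        have hq' : (fun b : {a // a ∈ G.act2 t} => σ2 t b.1)
            ∈ MixedStrat {a // a ∈ G.act2 t} := restr_mem G hσ2 hc.2
        have hlt := hopt t hc _ hq'
        rw [expPay_subtype G t (fun a1 a2 => u t + W G u (G.tr t a1 a2)) (σ1 t) (σ2 t)]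
          at hlt
        rw [double_split hs1 hs2 (u t) (fun a1 a2 => W G u (G.tr t a1 a2))] at hlt
        have hkcast : (kk G t : ℝ) - 1 ≥ 0 := by
          have : (1:ℝ) ≤ (kk G t : ℝ) := by exact_mod_cast kk_pos G t
          linarith
        have hterm : ∀ a1 ∈ G.act1 t, ∀ a2 ∈ G.act2 t,
            σ1 t a1 * σ2 t a2 * (W G u (G.tr t a1 a2) - ((kk G t : ℝ) - 1) * ε0)
              ≤ σ1 t a1 * σ2 t a2 * aExp G u σ1 σ2 (Fintype.card G.S) (G.tr t a1 a2) := by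
          intro a1 h1 a2 h2
          refine mul_le_mul_of_nonneg_left ?_ (mul_nonneg (hpos t a1) ((hσ2 t).1 a2))
          have hklt := kk_tr_lt G hacyc h1 h2
          have hih := ih (G.tr t a1 a2) (by omega) σ2 hσ2
          have : (kk G (G.tr t a1 a2) : ℝ) ≤ (kk G t : ℝ) - 1 := by
            have h' : kk G (G.tr t a1 a2) + 1 ≤ kk G t := hklt
            have h'' := (Nat.cast_le (α := ℝ)).2 h'
            push_cast at h''
            linarith
          nlinarith
        calc W G u t - (kk G t : ℝ) * ε0
            = (W G u t - ε0) - ((kk G t : ℝ) - 1) * ε0 := by ring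
          _ ≤ (u t + ∑ a1 ∈ G.act1 t, ∑ a2 ∈ G.act2 t,
                σ1 t a1 * σ2 t a2 * W G u (G.tr t a1 a2)) - ((kk G t : ℝ) - 1) * ε0 := by
              linarith
          _ = u t + ∑ a1 ∈ G.act1 t, ∑ a2 ∈ G.act2 t,
                σ1 t a1 * σ2 t a2 * (W G u (G.tr t a1 a2) - ((kk G t : ℝ) - 1) * ε0) := by
              rw [double_shift hs1 hs2 (((kk G t : ℝ) - 1) * ε0)
                (fun a1 a2 => W G u (G.tr t a1 a2))]
              ring
          _ ≤ u t + ∑ a1 ∈ G.act1 t, ∑ a2 ∈ G.act2 t,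
                σ1 t a1 * σ2 t a2 * aExp G u σ1 σ2 (Fintype.card G.S) (G.tr t a1 a2) := by
              refine add_le_add_right (Finset.sum_le_sum fun a1 h1 =>
                Finset.sum_le_sum fun a2 h2 => hterm a1 h1 a2 h2) _
          _ = aExp G u σ1 σ2 (Fintype.card G.S) t := (aExp_rec G u hacyc _ _ hc).symm
      · rw [aExp_dead G u _ _ hc, W_dead G u hc]
        have : 0 ≤ (kk G t : ℝ) * ε0 := mul_nonneg (by positivity) hε0pos.le
        linarith
  have h1 : W G u s - (kk G s : ℝ) * ε0
      ≤ ⨅ σ2 : ↥(MStrat G G.act2), aExp G u σ1 σ2.1 (Fintype.card G.S) s :=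
    le_ciInf fun σ2 => main (kk G s) s le_rfl σ2.1 σ2.2
  have h2 : (⨅ σ2 : ↥(MStrat G G.act2), aExp G u σ1 σ2.1 (Fintype.card G.S) s)
      ≤ aVal G u s :=
    le_ciSup (bddAbove_outer G u s) ⟨σ1, hσ1⟩
  have h3 : (kk G s : ℝ) * ε0 ≤ ε := by
    have hk : (kk G s : ℝ) ≤ (Fintype.card G.S : ℝ) := by exact_mod_cast kk_le G s
    have : (Fintype.card G.S : ℝ) * ε0 = ε := by
      rw [hε0]
      field_simp
    nlinarith
  linarith

/-! ### Dead-end states -/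

lemma aVal_dead {s : G.S} (h : ¬((G.act1 s).Nonempty ∧ (G.act2 s).Nonempty)) :
    aVal G u s = u s := by
  haveI : Nonempty ↥(MStrat G G.act1) := (mstrat_nonempty G G.act1).to_subtype
  haveI : Nonempty ↥(MStrat G G.act2) := (mstrat_nonempty G G.act2).to_subtype
  rw [aVal]
  have h1 : ∀ σ1 : ↥(MStrat G G.act1),
      (⨅ σ2 : ↥(MStrat G G.act2), aExp G u σ1.1 σ2.1 (Fintype.card G.S) s) = u s := by
    intro σ1
    rw [show (fun σ2 : ↥(MStrat G G.act2) => aExp G u σ1.1 σ2.1 (Fintype.card G.S) s)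
      = fun _ => u s from funext fun σ2 => aExp_dead G u _ _ h _]
    exact ciInf_const
  rw [show (fun σ1 : ↥(MStrat G G.act1) =>
      ⨅ σ2 : ↥(MStrat G G.act2), aExp G u σ1.1 σ2.1 (Fintype.card G.S) s)
    = fun _ => u s from funext h1]
  exact ciSup_const

lemma aVal_eq_W (hacyc : G.Acyclic) (s : G.S) : aVal G u s = W G u s :=
  le_antisymm (aVal_le_W G u hacyc s) (W_le_aVal G u hacyc s)

end BIproof
/-- Backward induction correctness for acyclic concurrent games: at every
non-dead-end state the value equals the value of the local matrix game with
payoffs `u(s) + υ(G_{δ(s,a1,a2)}, u)`, and at every dead-end state the value is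
`u(s)`. -/
theorem backward_induction (G : AGame) (hacyc : G.Acyclic) (u : G.S → ℝ) :
    (∀ s : G.S, (G.act1 s).Nonempty → (G.act2 s).Nonempty →
      aVal G u s =
        matVal {a // a ∈ G.act1 s} {a // a ∈ G.act2 s}
          (fun a1 a2 => u s + aVal G u (G.tr s a1.1 a2.1))) ∧
    (∀ s : G.S, ¬ ((G.act1 s).Nonempty ∧ (G.act2 s).Nonempty) →
      aVal G u s = u s) := by
  constructor
  · intro s h1 h2
    rw [BIproof.aVal_eq_W G u hacyc s, BIproof.W_rec G u hacyc ⟨h1, h2⟩]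
    congr 1
    funext a1 a2
    rw [BIproof.aVal_eq_W G u hacyc]
  · intro s h
    exact BIproof.aVal_dead G u h
end
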